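/- arXiv:1806.00212 — 5 statements merged into one kernel-verified Lean document; each statement's English description precedes it below -/
import Mathlib

section
/- Let A : [1,∞) → (0,∞) be non-decreasing and set T(r) = ∫₁^r A(t)/t dt; assume T(r) → ∞ as r → ∞ and T(r) > e for all r in some interval [r₀,∞). Fix ε > 0 and 0 < δ < 1 and set φ_ε(r) = r/((log log T(r))^{1+ε} · log T(r)). Then there exists a set E_ε ⊆ [1,∞) of finite logarithmic measure such that for all r ∉ E_ε with r ≥ r₀, φ_ε(r) > 2^{1/(1−δ)} and φ_ε(r) < r, and for all R with r < R ≤ r + φ_ε(r)^δ, one has T(R) ≤ T(r) + 4e·(1/φ_ε(r))^{1−δ}·T(r). -/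
open MeasureTheory Filter Metric

/-- `log⁺ x = max(0, log x)` -/
noncomputable def logPlus (x : ℝ) : ℝ := max 0 (Real.log x)

/-- Nevanlinna proximity function `m(r, f)`. -/
noncomputable def nevProx (f : ℂ → ℂ) (r : ℝ) : ℝ :=
  (2 * Real.pi)⁻¹ * ∫ θ in (0:ℝ)..(2 * Real.pi), logPlus ‖f (r * Complex.exp (θ * Complex.I))‖

open scoped Classical in
/-- Multiplicity of `z` as a pole of `f`. -/
noncomputable def poleMult (f : ℂ → ℂ) (z : ℂ) : ℕ :=
  if h : MeromorphicAt f z then (-(WithTop.untopD 0 (meromorphicOrderAt f z))).toNat else 0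

/-- Unintegrated counting function `n(t, f)`: number of poles in the closed disc of
radius `t`, counted with multiplicity. -/
noncomputable def poleCnt (f : ℂ → ℂ) (t : ℝ) : ℝ :=
  ∑' z : ℂ, (closedBall (0:ℂ) t).indicator (fun u => (poleMult f u : ℝ)) z

/-- Integrated counting function `N(r, f)` of poles. -/
noncomputable def nevCount (f : ℂ → ℂ) (r : ℝ) : ℝ :=
  (∫ t in (0:ℝ)..r, (poleCnt f t - poleCnt f 0) / t) + poleCnt f 0 * Real.log r

/-- Nevanlinna characteristic `T(r, f) = m(r, f) + N(r, f)`. -/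
noncomputable def nevChar (f : ℂ → ℂ) (r : ℝ) : ℝ := nevProx f r + nevCount f r

/-- `f` is a rational function. -/
def IsRationalFn (f : ℂ → ℂ) : Prop :=
  ∃ p q : Polynomial ℂ, q ≠ 0 ∧ ∀ z : ℂ, q.eval z ≠ 0 → f z = p.eval z / q.eval z

/-- `E ⊆ [1, ∞)` has zero lower density. -/
def ZeroLowerDensity (E : Set ℝ) : Prop :=
  Filter.liminf (fun r => (volume (E ∩ Set.Icc 1 r)).toReal / r) Filter.atTop = 0

/-- `E ⊆ [1, ∞)` has zero upper density. -/
def ZeroUpperDensity (E : Set ℝ) : Prop :=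
  Filter.limsup (fun r => (volume (E ∩ Set.Icc 1 r)).toReal / r) Filter.atTop = 0

/-- `E` has finite logarithmic measure: `∫_E dt/t < ∞`. -/
def FiniteLogMeasure (E : Set ℝ) : Prop :=
  ∫⁻ t in E, ENNReal.ofReal t⁻¹ < ⊤

set_option maxHeartbeats 1000000

lemma self_div_le_log {η : ℝ} (hη : 0 ≤ η) : η / (1 + η) ≤ Real.log (1 + η) := by
  have h1 : (0:ℝ) < 1 + η := by linarith
  have h2 := Real.log_le_sub_one_of_pos (x := (1 + η)⁻¹) (by positivity)
  rw [Real.log_inv] at h2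
  have h3 : η / (1 + η) = 1 - (1 + η)⁻¹ := by field_simp; ring
  linarith

lemma key_ineq (ε : ℝ) (hε : 0 < ε) :
    ∃ K : ℝ, 0 ≤ K ∧ ∀ U U' η : ℝ, Real.exp 1 ≤ U → U ≤ U' → 0 ≤ η →
      η ≤ 2 * Real.exp 1 → U + Real.log (1 + η) ≤ U' →
      η / (U * Real.log U ^ (1 + ε)) ≤
        K * (Real.log U ^ (-ε) - Real.log U' ^ (-ε)) := by
  have h2e : (0:ℝ) < 1 - (2:ℝ) ^ (-ε) := by
    have := Real.rpow_lt_one_of_one_lt_of_neg (x := 2) (z := -ε) one_lt_two (by linarith)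
    linarith
  have h2p : (0:ℝ) < (2:ℝ) ^ (1+ε) := Real.rpow_pos_of_pos two_pos _
  refine ⟨max (14 * 2 ^ (1+ε) / ε) (2 / (1 - 2 ^ (-ε))),
    le_max_of_le_right (by positivity), ?_⟩
  intro U U' η hU hUU' hη0 hη2 hlog
  have heg : (2.7:ℝ) < Real.exp 1 := by have := Real.exp_one_gt_d9; linarith
  have hel : Real.exp 1 < 2.72 := by have := Real.exp_one_lt_d9; linarith
  have hUpos : 0 < U := lt_of_lt_of_le (Real.exp_pos 1) hU
  have hU'pos : 0 < U' := lt_of_lt_of_le hUpos hUU'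
  set W := Real.log U with hWdef
  set W' := Real.log U' with hW'def
  have hW1 : 1 ≤ W := by
    have := Real.log_le_log (Real.exp_pos 1) hU
    rwa [Real.log_exp] at this
  have hWpos : 0 < W := by linarith
  have hWW' : W ≤ W' := Real.log_le_log hUpos hUU'
  have hW'pos : 0 < W' := by linarith
  have hL0 : 0 ≤ Real.log (1+η) := Real.log_nonneg (by linarith)
  have hL2 : Real.log (1+η) ≤ 2 := by
    have h1 : 1 + η ≤ Real.exp 1 * Real.exp 1 := by nlinarith
    have h2 := Real.log_le_log (by linarith) h1
    rw [← Real.exp_add, Real.log_exp] at h2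
    linarith
  have hη7 : η ≤ 7 * Real.log (1 + η) := by
    have h1 := self_div_le_log hη0
    have h2 : 1 + η ≤ 7 := by nlinarith
    have h3 : η / 7 ≤ η / (1+η) :=
      div_le_div_of_nonneg_left hη0 (by linarith) h2
    linarith
  have hstep : η / (14 * U) ≤ W' - W := by
    have h1 : Real.log (U + Real.log (1+η)) ≤ W' :=
      Real.log_le_log (by positivity) hlog
    have h2 : Real.log (U + Real.log (1+η)) - W = Real.log (1 + Real.log (1+η)/U) := by
      rw [hWdef, ← Real.log_div (by positivity) (ne_of_gt hUpos)]
      congr 1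
      field_simp
    set x := Real.log (1+η)/U with hxdef
    have hx0 : 0 ≤ x := div_nonneg hL0 hUpos.le
    have hx1 : x ≤ 1 := by
      rw [hxdef, div_le_one hUpos]; linarith
    have h3 := self_div_le_log hx0
    have h4 : x / 2 ≤ x / (1 + x) :=
      div_le_div_of_nonneg_left hx0 (by linarith) (by linarith)
    have h5 : η / (14 * U) ≤ x / 2 := by
      rw [hxdef]
      rw [div_le_div_iff₀ (by positivity) (by positivity)]
      have h6 : Real.log (1+η) / U * (14 * U) = Real.log (1+η) * 14 := by
        field_simp
      rw [h6]
      linarith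
    linarith
  set a := W ^ ε with ha
  set a' := W' ^ ε with ha'
  set P := (2:ℝ) ^ ε with hP
  set G := Real.log (W'/W) with hG
  have hP1 : 1 < P := by
    rw [hP]
    exact Real.one_lt_rpow_iff_of_pos two_pos |>.2 (Or.inl ⟨one_lt_two, hε⟩)
  have ha1 : 1 ≤ a := Real.one_le_rpow hW1 hε.le
  have haa' : a ≤ a' := Real.rpow_le_rpow hWpos.le hWW' hε.le
  have hapos : 0 < a := by linarith
  have ha'pos : 0 < a' := by linarith
  have hWneg : W ^ (-ε) = a⁻¹ := by rw [Real.rpow_neg hWpos.le, ha]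
  have hW'neg : W' ^ (-ε) = a'⁻¹ := by rw [Real.rpow_neg hW'pos.le, ha']
  have hWone : W ^ (1+ε) = W * a := by
    rw [Real.rpow_add hWpos, Real.rpow_one, ha]
  have h2s : (2:ℝ) ^ (1+ε) = 2 * P := by
    rw [Real.rpow_add two_pos, Real.rpow_one, hP]
  have h2em : (2:ℝ) ^ (-ε) = P⁻¹ := by
    rw [Real.rpow_neg (by norm_num), hP]
  have hexp : 1 + ε * G ≤ a'/a := by
    have h1 := Real.add_one_le_exp (G * ε)
    have h3 : (W'/W) ^ ε = Real.exp (G * ε) :=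
      Real.rpow_def_of_pos (by positivity) ε
    have h2 : (W'/W) ^ ε = a'/a := by
      rw [Real.div_rpow hW'pos.le hWpos.le, ha, ha']
    rw [← h2, h3]
    nlinarith [h1]
  have hlogWW : (W' - W)/W' ≤ G := by
    have h1 := Real.log_le_sub_one_of_pos (x := W/W') (by positivity)
    have h2 : Real.log (W/W') = - G := by
      rw [hG, Real.log_div (ne_of_gt hWpos) (ne_of_gt hW'pos),
        Real.log_div (ne_of_gt hW'pos) (ne_of_gt hWpos)]
      ring
    rw [h2] at h1
    have h3 : (W' - W)/W' = 1 - W/W' := by field_simp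
    linarith
  have hPA : W' ≤ 2*W → a' ≤ P * a := by
    intro hc
    calc a' ≤ (2*W) ^ ε := Real.rpow_le_rpow hW'pos.le hc hε.le
      _ = 2 ^ ε * W ^ ε := Real.mul_rpow (by norm_num) hWpos.le
      _ = P * a := by rw [ha, hP]
  have hPB : 2*W ≤ W' → P * a ≤ a' := by
    intro hc
    calc P * a = (2*W)^ε := by
          rw [Real.mul_rpow (by norm_num : (0:ℝ) ≤ 2) hWpos.le]
      _ ≤ a' := Real.rpow_le_rpow (by positivity) hc hε.le
  rw [hWneg, hW'neg, hWone, h2s, h2em]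
  clear_value W W' a a' P G
  have hεne : ε ≠ 0 := ne_of_gt hε
  have hUne : U ≠ 0 := ne_of_gt hUpos
  have hW'ne : W' ≠ 0 := ne_of_gt hW'pos
  have hane : a ≠ 0 := ne_of_gt hapos
  have ha'ne : a' ≠ 0 := ne_of_gt ha'pos
  clear hWneg hW'neg hWone h2s h2em hP ha ha' hG hWdef hW'def h2e h2p hlog hL0 hL2
  have hPinv : P⁻¹ < 1 := by
    rw [inv_lt_one_iff₀]; right; exact hP1
  have hPpos : 0 < P := by linarith
  have hPe : (0:ℝ) < 1 - P⁻¹ := by linarith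
  have hdiffpos : 0 ≤ a⁻¹ - a'⁻¹ := by
    have := inv_anti₀ hapos haa'
    linarith
  by_cases hcase : W' ≤ 2 * W
  · -- moderate growth case
    have h2W : a' ≤ P * a := hPA hcase
    have hA1 : a * (ε * (η/(14*U)) / W') ≤ a' - a := by
      have t0 : (1 + ε * G) * a ≤ a' := by
        rw [← le_div_iff₀ hapos]; exact hexp
      have t1 : ε * (η/(14*U)) / W' ≤ ε * G := by
        rw [mul_div_assoc]
        refine mul_le_mul_of_nonneg_left ?_ hε.le
        calc (η/(14*U))/W' ≤ (W' - W)/W' :=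
              div_le_div_of_nonneg_right hstep hW'pos.le
          _ ≤ G := hlogWW
      have t2 : a * (ε * (η/(14*U)) / W') ≤ a * (ε * G) :=
        mul_le_mul_of_nonneg_left t1 hapos.le
      linarith [t0, t2]
    have hfrac : a⁻¹ - a'⁻¹ = (a' - a)/(a * a') := by
      field_simp
    have hA2 : (ε * (η/(14*U)) / W') / a' ≤ a⁻¹ - a'⁻¹ := by
      rw [hfrac]
      calc (ε * (η/(14*U)) / W') / a'
          = (a * (ε * (η/(14*U)) / W'))/(a * a') := by
            rw [mul_div_mul_left _ _ (ne_of_gt hapos)]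
        _ ≤ (a' - a)/(a*a') := by
            apply div_le_div_of_nonneg_right hA1 (by positivity)
    have hprod : W' * a' ≤ (2*P) * (W * a) := by
      calc W' * a' ≤ (2*W) * (P * a) :=
            mul_le_mul hcase h2W ha'pos.le (by positivity)
        _ = (2*P) * (W*a) := by ring
    have hcomp : η / (U*(W*a)) ≤ (14 * (2*P)/ε) * ((ε * (η/(14*U)) / W') / a') := by
      have hrhs : (14 * (2*P)/ε) * ((ε * (η/(14*U)) / W') / a')
          = (2*P) * η / (U * (W' * a')) := by
        field_simp
      rw [hrhs]
      rw [div_le_div_iff₀ (by positivity) (by positivity)]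
      nlinarith [mul_le_mul_of_nonneg_left hprod (by positivity : (0:ℝ) ≤ η * U)]
    calc η/(U*(W*a)) ≤ (14 * (2*P)/ε) * ((ε * (η/(14*U)) / W') / a') := hcomp
      _ ≤ (14 * (2*P)/ε) * (a⁻¹ - a'⁻¹) :=
          mul_le_mul_of_nonneg_left hA2 (by positivity)
      _ ≤ max (14 * (2*P) / ε) (2 / (1 - P⁻¹)) * (a⁻¹ - a'⁻¹) :=
          mul_le_mul_of_nonneg_right (le_max_left _ _) hdiffpos
  · push_neg at hcase
    have h1 : P * a ≤ a' := hPB hcase.le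
    have h2 : a'⁻¹ ≤ P⁻¹ * a⁻¹ := by
      rw [← mul_inv]
      exact inv_anti₀ (by positivity) h1
    have h3 : (1 - P⁻¹) * a⁻¹ ≤ a⁻¹ - a'⁻¹ := by nlinarith [h2]
    have h4 : η/(U*(W*a)) ≤ 2/a := by
      rw [div_le_div_iff₀ (by positivity) hapos]
      nlinarith [mul_le_mul_of_nonneg_right (show η ≤ 2*U by linarith) hapos.le,
        mul_pos hUpos hapos]
    calc η/(U*(W*a)) ≤ 2/a := h4
      _ = (2/(1-P⁻¹)) * ((1-P⁻¹) * a⁻¹) := by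
          rw [← mul_assoc, div_mul_cancel₀ _ (ne_of_gt hPe), div_eq_mul_inv]
      _ ≤ (2/(1-P⁻¹)) * (a⁻¹ - a'⁻¹) :=
          mul_le_mul_of_nonneg_left h3 (by positivity)
      _ ≤ max (14 * (2*P) / ε) (2 / (1 - P⁻¹)) * (a⁻¹ - a'⁻¹) :=
          mul_le_mul_of_nonneg_right (le_max_right _ _) hdiffpos

open scoped Classical in
noncomputable def pickPt (E : Set ℝ) (c b : ℝ) : ℝ :=
  if h : (E ∩ Set.Ici b).Nonempty ∧ 0 < c then
    Classical.choose (Real.lt_sInf_add_pos h.1 h.2) else b + 1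

lemma pickPt_spec {E : Set ℝ} {c b : ℝ} (h : (E ∩ Set.Ici b).Nonempty) (hc : 0 < c) :
    pickPt E c b ∈ E ∩ Set.Ici b ∧ pickPt E c b < sInf (E ∩ Set.Ici b) + c := by
  rw [pickPt, dif_pos (⟨h, hc⟩ : _ ∧ _)]
  exact Classical.choose_spec (Real.lt_sInf_add_pos h hc)

open scoped Classical in
noncomputable def bSeq (E : Set ℝ) (g : ℝ → ℝ) (M : ℝ) : ℕ → ℝ
  | 0 => M
  | n + 1 =>
    if (E ∩ Set.Ici (bSeq E g M n)).Nonempty then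
      pickPt E ((2:ℝ)⁻¹ ^ n) (bSeq E g M n) + g (pickPt E ((2:ℝ)⁻¹ ^ n) (bSeq E g M n))
    else bSeq E g M n + 1

lemma bSeq_succ_pos {E : Set ℝ} {g : ℝ → ℝ} {M : ℝ} {n : ℕ}
    (h : (E ∩ Set.Ici (bSeq E g M n)).Nonempty) :
    bSeq E g M (n+1) = pickPt E ((2:ℝ)⁻¹ ^ n) (bSeq E g M n)
      + g (pickPt E ((2:ℝ)⁻¹ ^ n) (bSeq E g M n)) := by
  rw [bSeq, if_pos h]

lemma bSeq_succ_neg {E : Set ℝ} {g : ℝ → ℝ} {M : ℝ} {n : ℕ}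
    (h : ¬ (E ∩ Set.Ici (bSeq E g M n)).Nonempty) :
    bSeq E g M (n+1) = bSeq E g M n + 1 := by
  rw [bSeq, if_neg h]

theorem growth_lemma_integral_mean
    (A : ℝ → ℝ) (hApos : ∀ t : ℝ, 1 ≤ t → 0 < A t) (hAmono : MonotoneOn A (Set.Ici 1))
    (T : ℝ → ℝ) (hT : ∀ r : ℝ, T r = ∫ t in (1:ℝ)..r, A t / t)
    (htop : Filter.Tendsto T Filter.atTop Filter.atTop)
    (r₀ : ℝ) (hr₀ : 1 ≤ r₀) (hTe : ∀ r : ℝ, r₀ ≤ r → Real.exp 1 < T r)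
    (ε : ℝ) (hε : 0 < ε) (δ : ℝ) (hδ0 : 0 < δ) (hδ1 : δ < 1)
    (φ : ℝ → ℝ)
    (hφ : ∀ r : ℝ, φ r = r / ((Real.log (Real.log (T r))) ^ (1 + ε) * Real.log (T r))) :
    ∃ E : Set ℝ, E ⊆ Set.Ici 1 ∧ FiniteLogMeasure E ∧
      ∀ r : ℝ, r ∉ E → r₀ ≤ r → (2:ℝ) ^ (1 / (1 - δ)) < φ r → φ r < r →
        ∀ R : ℝ, r < R → R ≤ r + φ r ^ δ →
          T R ≤ T r + 4 * Real.exp 1 * (1 / φ r) ^ (1 - δ) * T r := by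
  classical
  have heg : (2.7:ℝ) < Real.exp 1 := by have := Real.exp_one_gt_d9; linarith
  have hδ' : (0:ℝ) < 1 - δ := by linarith
  -- integrability and monotonicity of T
  have hInt : ∀ a b : ℝ, 1 ≤ a → a ≤ b → IntervalIntegrable (fun t => A t / t) volume a b := by
    intro a b ha hab
    have hsub : Set.uIcc a b ⊆ Set.Ici 1 := by
      rw [Set.uIcc_of_le hab]
      intro x hx
      exact le_trans ha hx.1
    have h1 : IntervalIntegrable A volume a b := (hAmono.mono hsub).intervalIntegrable
    have h2 : ContinuousOn (fun t : ℝ => t⁻¹) (Set.uIcc a b) := by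
      apply ContinuousOn.inv₀ continuousOn_id
      intro x hx
      have h4 : (1:ℝ) ≤ x := hsub hx
      intro hx0
      simp only [id_eq] at hx0
      rw [hx0] at h4
      linarith
    have h3 := h1.mul_continuousOn h2
    simpa [div_eq_mul_inv] using h3
  have hTdiff : ∀ a b : ℝ, 1 ≤ a → a ≤ b → T b = T a + ∫ t in a..b, A t / t := by
    intro a b ha hab
    rw [hT a, hT b,
      ← intervalIntegral.integral_add_adjacent_intervals (hInt 1 a le_rfl ha) (hInt a b ha hab)]
  have hTmono : ∀ a b : ℝ, 1 ≤ a → a ≤ b → T a ≤ T b := by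
    intro a b ha hab
    rw [hTdiff a b ha hab]
    have h0 : 0 ≤ ∫ t in a..b, A t / t := by
      apply intervalIntegral.integral_nonneg hab
      intro u hu
      have h1 : 1 ≤ u := le_trans ha hu.1
      exact div_nonneg (hApos u h1).le (by linarith)
    linarith
  -- choice of M
  obtain ⟨M₀, hM₀⟩ := Filter.eventually_atTop.mp
    (htop.eventually_ge_atTop (Real.exp (Real.exp 1)))
  set M : ℝ := max (max r₀ 2) M₀ with hM
  have hM2 : (2:ℝ) ≤ M := le_trans (le_max_right _ _) (le_max_left _ _)
  have hMr₀ : r₀ ≤ M := le_trans (le_max_left _ _) (le_max_left _ _)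
  have hM1 : (1:ℝ) ≤ M := by linarith
  have hMT : ∀ r, M ≤ r → Real.exp (Real.exp 1) ≤ T r := fun r h =>
    hM₀ r (le_trans (le_max_right _ _) h)
  have hTpos : ∀ r, M ≤ r → 0 < T r := fun r h =>
    lt_of_lt_of_le (Real.exp_pos _) (hMT r h)
  have hMu : ∀ r, M ≤ r → Real.exp 1 ≤ Real.log (T r) := by
    intro r h
    have h2 := Real.log_le_log (Real.exp_pos _) (hMT r h)
    rwa [Real.log_exp] at h2
  have hMw : ∀ r, M ≤ r → 1 ≤ Real.log (Real.log (T r)) := by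
    intro r h
    have h2 := Real.log_le_log (Real.exp_pos _) (hMu r h)
    rwa [Real.log_exp] at h2
  -- the exceptional set
  set Eb : Set ℝ := {r : ℝ | r₀ ≤ r ∧ (2:ℝ) ^ (1 / (1 - δ)) < φ r ∧ φ r < r ∧
    T r + 4 * Real.exp 1 * (1 / φ r) ^ (1 - δ) * T r < T (r + φ r ^ δ)} with hEb
  have h2pow1 : (1:ℝ) ≤ (2:ℝ) ^ (1 / (1 - δ)) :=
    Real.one_le_rpow one_le_two (by positivity)
  refine ⟨Eb, ?_, ?_, ?_⟩
  · intro r hr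
    exact le_trans hr₀ hr.1
  · -- finite logarithmic measure
    obtain ⟨K, hK0, hKey⟩ := key_ineq ε hε
    set E' : Set ℝ := Eb ∩ Set.Ici M with hE'
    set g : ℝ → ℝ := fun r => φ r ^ δ with hg
    set b : ℕ → ℝ := bSeq E' g M with hb
    have hsucc_pos : ∀ n : ℕ, (E' ∩ Set.Ici (b n)).Nonempty →
        b (n+1) = pickPt E' ((2:ℝ)⁻¹ ^ n) (b n) + g (pickPt E' ((2:ℝ)⁻¹ ^ n) (b n)) :=
      fun n h => bSeq_succ_pos h
    have hsucc_neg : ∀ n : ℕ, ¬ (E' ∩ Set.Ici (b n)).Nonempty →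
        b (n+1) = b n + 1 := fun n h => bSeq_succ_neg h
    have hb0 : b 0 = M := rfl
    have hbstep : ∀ n, M ≤ b n → b n + 1 ≤ b (n+1) := by
      intro n hMb
      by_cases h : (E' ∩ Set.Ici (b n)).Nonempty
      · have hp := pickPt_spec (E := E') (c := (2:ℝ)⁻¹ ^ n) (b := b n) h (by positivity)
        set p := pickPt E' ((2:ℝ)⁻¹ ^ n) (b n) with hpdef
        have hpE : p ∈ Eb := hp.1.1.1
        have hpb : b n ≤ p := hp.1.2
        have hφp1 : 1 < φ p := lt_of_le_of_lt h2pow1 hpE.2.1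
        have h1g : 1 ≤ g p := Real.one_le_rpow hφp1.le hδ0.le
        have hbeq : b (n+1) = p + g p := hsucc_pos n h
        rw [hbeq]
        linarith
      · rw [hsucc_neg n h]
    have hbM : ∀ n, M ≤ b n := by
      intro n
      induction n with
      | zero => exact le_rfl
      | succ n ih => linarith [hbstep n ih]
    have hbmono : ∀ n, b n ≤ b (n+1) := fun n => by linarith [hbstep n (hbM n)]
    have hbgrow : ∀ n : ℕ, M + n ≤ b n := by
      intro n
      induction n with
      | zero => simp [hb0]
      | succ n ih =>
        have := hbstep n (hbM n)
        push_cast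
        linarith
    set U : ℕ → ℝ := fun n => Real.log (T (b n)) with hU
    set W : ℕ → ℝ := fun n => Real.log (U n) with hW
    have hU_e : ∀ n, Real.exp 1 ≤ U n := fun n => hMu (b n) (hbM n)
    have hUpos : ∀ n, 0 < U n := fun n => lt_of_lt_of_le (Real.exp_pos 1) (hU_e n)
    have hW_1 : ∀ n, 1 ≤ W n := fun n => hMw (b n) (hbM n)
    have hUsucc : ∀ n, U n ≤ U (n+1) := fun n =>
      Real.log_le_log (hTpos (b n) (hbM n))
        (hTmono (b n) (b (n+1)) (le_trans hM1 (hbM n)) (hbmono n))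
    have hWmono : ∀ n, W n ≤ W (n+1) := fun n =>
      Real.log_le_log (hUpos n) (hUsucc n)
    set J : ℕ → Set ℝ := fun n =>
      if (E' ∩ Set.Ici (b n)).Nonempty then
        Set.Icc (sInf (E' ∩ Set.Ici (b n))) (b (n+1)) else ∅ with hJ
    have hWd : ∀ n, 0 ≤ W n ^ (-ε) - W (n+1) ^ (-ε) := by
      intro n
      have h1 : W n ^ ε ≤ W (n+1) ^ ε :=
        Real.rpow_le_rpow (by linarith [hW_1 n]) (hWmono n) hε.le
      have h2 : (0:ℝ) < W n ^ ε := Real.rpow_pos_of_pos (by linarith [hW_1 n]) _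
      rw [Real.rpow_neg (by linarith [hW_1 n]), Real.rpow_neg (by linarith [hW_1 n, hWmono n])]
      have := inv_anti₀ h2 h1
      linarith
    have hJbound : ∀ n, ∫⁻ t in J n, ENNReal.ofReal t⁻¹ ≤
        ENNReal.ofReal ((2:ℝ)⁻¹ ^ n + K * (W n ^ (-ε) - W (n+1) ^ (-ε))) := by
      intro n
      by_cases h : (E' ∩ Set.Ici (b n)).Nonempty
      · simp only [hJ, if_pos h]
        have hp := pickPt_spec (E := E') (c := (2:ℝ)⁻¹ ^ n) (b := b n) h (by positivity)
        set p := pickPt E' ((2:ℝ)⁻¹ ^ n) (b n) with hpdef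
        set c := sInf (E' ∩ Set.Ici (b n)) with hcdef
        have hpE : p ∈ Eb := hp.1.1.1
        have hpM : M ≤ p := hp.1.1.2
        have hpb : b n ≤ p := hp.1.2
        have hcb : b n ≤ c := le_csInf h (fun x hx => hx.2)
        have hcp : c ≤ p := csInf_le ⟨b n, fun x hx => hx.2⟩ hp.1
        have hpc : p < c + (2:ℝ)⁻¹ ^ n := hp.2
        have hc2 : 2 ≤ c := le_trans hM2 (le_trans (hbM n) hcb)
        have hcpos : (0:ℝ) < c := by linarith
        have hppos : (0:ℝ) < p := by linarith
        have hb1 : b (n+1) = p + g p := hsucc_pos n h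
        -- facts about φ p
        have hφp1 : 1 < φ p := lt_of_le_of_lt h2pow1 hpE.2.1
        have hφppos : 0 < φ p := by linarith
        have hgp_eq : g p = φ p ^ δ := rfl
        have hgp : 0 < g p := by rw [hgp_eq]; exact Real.rpow_pos_of_pos hφppos δ
        have hφpow : (2:ℝ) ≤ φ p ^ (1-δ) := by
          have h1 : ((2:ℝ) ^ (1/(1-δ))) ^ (1-δ) ≤ φ p ^ (1-δ) :=
            Real.rpow_le_rpow (by positivity) hpE.2.1.le (by linarith)
          rw [← Real.rpow_mul (by norm_num : (0:ℝ) ≤ 2),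
            one_div_mul_cancel (ne_of_gt hδ'), Real.rpow_one] at h1
          exact h1
        have hφpowpos : (0:ℝ) < φ p ^ (1-δ) := Real.rpow_pos_of_pos hφppos _
        have hinvp : (1 / φ p) ^ (1-δ) = φ p ^ (δ-1) := by
          rw [one_div, Real.inv_rpow hφppos.le, ← Real.rpow_neg hφppos.le, neg_sub]
        have hφd1 : φ p ^ (δ-1) = (φ p ^ (1-δ))⁻¹ := by
          rw [show δ - 1 = -(1-δ) by ring, Real.rpow_neg hφppos.le]
        set η : ℝ := 4 * Real.exp 1 * φ p ^ (δ - 1) with hηdef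
        have hη0 : 0 ≤ η := by
          rw [hηdef]; positivity
        have hηle : η ≤ 2 * Real.exp 1 := by
          rw [hηdef, hφd1]
          have h1 : (φ p ^ (1-δ))⁻¹ ≤ 2⁻¹ := inv_anti₀ two_pos hφpow
          have h2 := mul_le_mul_of_nonneg_left h1
            (by positivity : (0:ℝ) ≤ 4 * Real.exp 1)
          linarith
        have hTppos : 0 < T p := hTpos p hpM
        have hTb : (1 + η) * T p ≤ T (b (n+1)) := by
          rw [hb1, hgp_eq]
          have h1 : T p + 4 * Real.exp 1 * (1 / φ p) ^ (1-δ) * T p < T (p + φ p ^ δ) :=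
            hpE.2.2.2
          rw [hinvp] at h1
          rw [hηdef]
          linarith [h1]
        -- the key-lemma hypotheses
        have hl2 : U n ≤ Real.log (T p) :=
          Real.log_le_log (hTpos (b n) (hbM n)) (hTmono (b n) p (le_trans hM1 (hbM n)) hpb)
        have hUlog : U n + Real.log (1 + η) ≤ U (n+1) := by
          have h1p : (0:ℝ) < 1 + η := by linarith
          have l1 : Real.log ((1+η) * T p) ≤ U (n+1) :=
            Real.log_le_log (by positivity) hTb
          rw [Real.log_mul (ne_of_gt h1p) (ne_of_gt hTppos)] at l1
          linarith
        have hkeyW : η / (U n * W n ^ (1+ε)) ≤ K * (W n ^ (-ε) - W (n+1) ^ (-ε)) :=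
          hKey (U n) (U (n+1)) η (hU_e n) (hUsucc n) hη0 hηle hUlog
        -- the term bound
        have hw1 : 1 ≤ Real.log (Real.log (T p)) := hMw p hpM
        have hu_e : Real.exp 1 ≤ Real.log (T p) := hMu p hpM
        have hupos : 0 < Real.log (T p) := lt_of_lt_of_le (Real.exp_pos 1) hu_e
        have hψpos : 0 < Real.log (Real.log (T p)) ^ (1+ε) * Real.log (T p) := by positivity
        have hrval : p = φ p * (Real.log (Real.log (T p)) ^ (1+ε) * Real.log (T p)) := by
          rw [hφ p]
          field_simp
        have hmulφ : φ p ^ (δ-1) * φ p = φ p ^ δ := by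
          nth_rewrite 2 [← Real.rpow_one (φ p)]
          rw [← Real.rpow_add hφppos]
          norm_num
        have hgdiv : φ p ^ δ / p =
            φ p ^ (δ-1) / (Real.log (Real.log (T p)) ^ (1+ε) * Real.log (T p)) := by
          rw [div_eq_div_iff (ne_of_gt hppos) (ne_of_gt hψpos)]
          calc φ p ^ δ * (Real.log (Real.log (T p)) ^ (1+ε) * Real.log (T p))
              = (φ p ^ (δ-1) * φ p) * (Real.log (Real.log (T p)) ^ (1+ε) * Real.log (T p)) := by
                rw [hmulφ]
            _ = φ p ^ (δ-1) * (φ p * (Real.log (Real.log (T p)) ^ (1+ε) * Real.log (T p))) := by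
                ring
            _ = φ p ^ (δ-1) * p := by rw [← hrval]
        have hlW : W n ≤ Real.log (Real.log (T p)) := Real.log_le_log (hUpos n) hl2
        have hWn1 : (1:ℝ) ≤ W n := hW_1 n
        have hcomp2 : W n ^ (1+ε) * U n ≤
            Real.log (Real.log (T p)) ^ (1+ε) * Real.log (T p) := by
          apply mul_le_mul (Real.rpow_le_rpow (by linarith) hlW (by linarith)) hl2
            (hUpos n).le (by positivity)
        have hWUpos : 0 < W n ^ (1+ε) * U n := by
          have := Real.rpow_pos_of_pos (show (0:ℝ) < W n by linarith) (1+ε)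
          exact mul_pos this (hUpos n)
        have hterm : 2 * (g p / p) ≤ K * (W n ^ (-ε) - W (n+1) ^ (-ε)) := by
          have e4 : 2 * φ p ^ (δ-1) ≤ η := by
            rw [hηdef]
            have h5 : 0 ≤ (4 * Real.exp 1 - 2) * φ p ^ (δ-1) :=
              mul_nonneg (by linarith) (Real.rpow_nonneg hφppos.le (δ-1))
            linarith
          calc 2 * (g p / p) = 2 * (φ p ^ (δ-1) /
                (Real.log (Real.log (T p)) ^ (1+ε) * Real.log (T p))) := by
                rw [hgp_eq, hgdiv]
            _ ≤ 2 * (φ p ^ (δ-1) / (W n ^ (1+ε) * U n)) := by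
                have := div_le_div_of_nonneg_left (Real.rpow_nonneg hφppos.le (δ-1))
                  hWUpos hcomp2
                linarith
            _ = (2 * φ p ^ (δ-1)) / (W n ^ (1+ε) * U n) := (mul_div_assoc _ _ _).symm
            _ ≤ η / (W n ^ (1+ε) * U n) := div_le_div_of_nonneg_right e4 hWUpos.le
            _ = η / (U n * W n ^ (1+ε)) := by rw [mul_comm (W n ^ (1+ε)) (U n)]
            _ ≤ K * (W n ^ (-ε) - W (n+1) ^ (-ε)) := hkeyW
        -- measure of the interval
        have hIcc : ∫⁻ t in Set.Icc c (b (n+1)), ENNReal.ofReal t⁻¹ ≤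
            ENNReal.ofReal (c⁻¹ * (b (n+1) - c)) := by
          calc ∫⁻ t in Set.Icc c (b (n+1)), ENNReal.ofReal t⁻¹
              ≤ ∫⁻ _ in Set.Icc c (b (n+1)), ENNReal.ofReal c⁻¹ := by
                apply setLIntegral_mono measurable_const
                intro x hx
                exact ENNReal.ofReal_le_ofReal (inv_anti₀ hcpos hx.1)
            _ = ENNReal.ofReal c⁻¹ * volume (Set.Icc c (b (n+1))) := setLIntegral_const _ _
            _ = ENNReal.ofReal c⁻¹ * ENNReal.ofReal (b (n+1) - c) := by rw [Real.volume_Icc]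
            _ = ENNReal.ofReal (c⁻¹ * (b (n+1) - c)) :=
                (ENNReal.ofReal_mul (by positivity)).symm
        refine le_trans hIcc (ENNReal.ofReal_le_ofReal ?_)
        have hpow1 : (2:ℝ)⁻¹ ^ n ≤ 1 := by
          apply pow_le_one₀ (by norm_num) (by norm_num)
        have hcinv1 : c⁻¹ ≤ 1 := by
          rw [inv_le_one_iff₀]; right; linarith
        have hcinv2 : c⁻¹ ≤ 2 / p := by
          rw [le_div_iff₀ hppos]
          have h1 : c⁻¹ * p ≤ c⁻¹ * (2 * c) := by
            apply mul_le_mul_of_nonneg_left (by linarith) (by positivity)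
          have h2 : c⁻¹ * (2 * c) = 2 := by field_simp
          linarith
        calc c⁻¹ * (b (n+1) - c) = c⁻¹ * (p - c) + c⁻¹ * g p := by rw [hb1]; ring
          _ ≤ 1 * ((2:ℝ)⁻¹ ^ n) + (2/p) * g p := by
              apply add_le_add
              · exact mul_le_mul hcinv1 (by linarith) (by linarith) one_pos.le
              · exact mul_le_mul_of_nonneg_right hcinv2 hgp.le
          _ = (2:ℝ)⁻¹ ^ n + 2 * (g p / p) := by ring
          _ ≤ (2:ℝ)⁻¹ ^ n + K * (W n ^ (-ε) - W (n+1) ^ (-ε)) := by linarith [hterm]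
      · simp only [hJ, if_neg h]
        simp only [Measure.restrict_empty, lintegral_zero_measure]
        exact zero_le
    -- coverage
    have hcover : E' ⊆ ⋃ n, J n := by
      intro r hr
      have hrM : M ≤ r := hr.2
      have hex : ∃ m : ℕ, r < b (m+1) := by
        obtain ⟨m, hm⟩ := exists_nat_gt (r - M)
        refine ⟨m, ?_⟩
        have h1 := hbgrow (m+1)
        push_cast at h1
        linarith
      set n := Nat.find hex with hn
      have hn1 : r < b (n+1) := Nat.find_spec hex
      have hn0 : b n ≤ r := by
        rcases Nat.eq_zero_or_pos n with h0 | h0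
        · rw [h0, hb0]; exact hrM
        · obtain ⟨k, hk⟩ := Nat.exists_eq_succ_of_ne_zero (Nat.pos_iff_ne_zero.mp h0)
          have h2 := Nat.find_min hex (show k < n by rw [hk]; exact Nat.lt_succ_self k)
          push_neg at h2
          rw [hk]
          exact h2
      have hne : (E' ∩ Set.Ici (b n)).Nonempty := ⟨r, hr, hn0⟩
      refine Set.mem_iUnion.mpr ⟨n, ?_⟩
      simp only [hJ, if_pos hne]
      exact ⟨csInf_le ⟨b n, fun x hx => hx.2⟩ ⟨hr, hn0⟩, hn1.le⟩
    -- assembling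
    have hEbsub : Eb ⊆ Set.Icc 1 M ∪ ⋃ n, J n := by
      intro r hr
      by_cases hrM : r ≤ M
      · exact Or.inl ⟨le_trans hr₀ hr.1, hrM⟩
      · exact Or.inr (hcover ⟨hr, (not_le.mp hrM).le⟩)
    show ∫⁻ t in Eb, ENNReal.ofReal t⁻¹ < ⊤
    have hstep1 : ∫⁻ t in Eb, ENNReal.ofReal t⁻¹ ≤
        ∫⁻ t in (Set.Icc 1 M ∪ ⋃ n, J n), ENNReal.ofReal t⁻¹ :=
      lintegral_mono' (Measure.restrict_mono hEbsub le_rfl) le_rfl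
    have hstep2 : ∫⁻ t in (Set.Icc 1 M ∪ ⋃ n, J n), ENNReal.ofReal t⁻¹ ≤
        (∫⁻ t in Set.Icc 1 M, ENNReal.ofReal t⁻¹) +
        ∫⁻ t in ⋃ n, J n, ENNReal.ofReal t⁻¹ := lintegral_union_le _ _ _
    have hIccM : ∫⁻ t in Set.Icc 1 M, ENNReal.ofReal t⁻¹ ≤ ENNReal.ofReal (M - 1) := by
      calc ∫⁻ t in Set.Icc 1 M, ENNReal.ofReal t⁻¹
          ≤ ∫⁻ _ in Set.Icc 1 M, (1:ENNReal) := by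
            apply setLIntegral_mono measurable_const
            intro x hx
            calc ENNReal.ofReal x⁻¹ ≤ ENNReal.ofReal 1 := by
                  apply ENNReal.ofReal_le_ofReal
                  rw [inv_le_one_iff₀]; right; exact hx.1
              _ = 1 := ENNReal.ofReal_one
        _ = volume (Set.Icc 1 M) := by rw [setLIntegral_const, one_mul]
        _ = ENNReal.ofReal (M - 1) := Real.volume_Icc
    have htsum : ∑' n, ∫⁻ t in J n, ENNReal.ofReal t⁻¹ ≤ ENNReal.ofReal (2 + K) := by
      calc ∑' n, ∫⁻ t in J n, ENNReal.ofReal t⁻¹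
          ≤ ∑' n, ENNReal.ofReal ((2:ℝ)⁻¹ ^ n + K * (W n ^ (-ε) - W (n+1) ^ (-ε))) :=
            ENNReal.tsum_le_tsum hJbound
        _ ≤ ENNReal.ofReal (2 + K) := by
            rw [ENNReal.tsum_eq_iSup_nat]
            apply iSup_le
            intro N
            rw [← ENNReal.ofReal_sum_of_nonneg (fun i _ =>
              add_nonneg (by positivity) (mul_nonneg hK0 (hWd i)))]
            apply ENNReal.ofReal_le_ofReal
            have hsplit : ∑ i ∈ Finset.range N,
                ((2:ℝ)⁻¹ ^ i + K * (W i ^ (-ε) - W (i+1) ^ (-ε)))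
                = (∑ i ∈ Finset.range N, (2:ℝ)⁻¹ ^ i) +
                  ((fun i => K * W i ^ (-ε)) 0 - (fun i => K * W i ^ (-ε)) N) := by
              rw [Finset.sum_add_distrib, ← Finset.sum_range_sub' (fun i => K * W i ^ (-ε)) N]
              congr 1
              apply Finset.sum_congr rfl
              intro i _
              ring
            rw [hsplit]
            simp only
            have hgeo : ∑ i ∈ Finset.range N, (2:ℝ)⁻¹ ^ i ≤ 2 := by
              have := sum_geometric_two_le N
              simpa [one_div] using this
            have hW0 : W 0 ^ (-ε) ≤ 1 :=
              Real.rpow_le_one_of_one_le_of_nonpos (hW_1 0) (by linarith)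
            have hWN : 0 ≤ W N ^ (-ε) :=
              Real.rpow_nonneg (by linarith [hW_1 N]) _
            have h1 : K * W 0 ^ (-ε) ≤ K := by
              have := mul_le_mul_of_nonneg_left hW0 hK0
              linarith
            have h2 : 0 ≤ K * W N ^ (-ε) := mul_nonneg hK0 hWN
            linarith
    have hiU : ∫⁻ t in ⋃ n, J n, ENNReal.ofReal t⁻¹ ≤ ENNReal.ofReal (2 + K) :=
      le_trans (lintegral_iUnion_le _ _) htsum
    calc ∫⁻ t in Eb, ENNReal.ofReal t⁻¹
        ≤ (∫⁻ t in Set.Icc 1 M, ENNReal.ofReal t⁻¹) +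
          ∫⁻ t in ⋃ n, J n, ENNReal.ofReal t⁻¹ := le_trans hstep1 hstep2
      _ ≤ ENNReal.ofReal (M - 1) + ENNReal.ofReal (2 + K) := add_le_add hIccM hiU
      _ < ⊤ := by
          apply ENNReal.add_lt_top.mpr
          exact ⟨ENNReal.ofReal_lt_top, ENNReal.ofReal_lt_top⟩
  · -- the conclusion off the exceptional set
    intro r hrE hr₀r h1 h2 R hrR hRle
    have hnot : ¬ (T r + 4 * Real.exp 1 * (1 / φ r) ^ (1 - δ) * T r < T (r + φ r ^ δ)) :=
      fun hc => hrE ⟨hr₀r, h1, h2, hc⟩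
    push_neg at hnot
    have hr1 : (1:ℝ) ≤ r := le_trans hr₀ hr₀r
    have hR1 : (1:ℝ) ≤ R := by linarith
    exact le_trans (hTmono R (r + φ r ^ δ) hR1 hRle) hnot
end

section
/- Let A : [1,∞) → (0,∞) be non-decreasing and set T(r) = ∫₁^r A(t)/t dt; assume T(r) → ∞ and that T has finite order ρ = limsup_{r→∞} (log T(r))/(log r) < ∞. Then for every h > 0 and K > 1 there exists a set E ⊆ [1,∞) whose upper logarithmic density limsup_{r→∞} (1/log r)·∫_{E∩[1,r]} dt/t is at most ρ·(log 2)/(log K), such that T(r + h) ≤ T(r) + 4hK·T(r)/r for all sufficiently large r ∉ E. -/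
open MeasureTheory Filter Metric

section GrowthAux

variable {A T : ℝ → ℝ}

lemma auxInt (hAmono : MonotoneOn A (Set.Ici 1)) {a b : ℝ} (ha : 1 ≤ a) (hab : a ≤ b) :
    IntervalIntegrable (fun t => A t / t) volume a b := by
  have hsub : Set.uIcc a b ⊆ Set.Ici 1 := by
    rw [Set.uIcc_of_le hab]
    exact fun x hx => le_trans ha hx.1
  have h1 : IntervalIntegrable A volume a b := (hAmono.mono hsub).intervalIntegrable
  have h2 : ContinuousOn (fun t : ℝ => t⁻¹) (Set.uIcc a b) := by
    apply ContinuousOn.inv₀ continuousOn_id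
    intro x hx
    have : (1:ℝ) ≤ x := hsub hx
    positivity
  simpa [div_eq_mul_inv] using h1.mul_continuousOn h2

lemma auxTdiff (hAmono : MonotoneOn A (Set.Ici 1))
    (hT : ∀ r : ℝ, T r = ∫ t in (1:ℝ)..r, A t / t) {a b : ℝ} (ha : 1 ≤ a) (hab : a ≤ b) :
    T b = T a + ∫ t in a..b, A t / t := by
  rw [hT, hT]
  exact (intervalIntegral.integral_add_adjacent_intervals (auxInt hAmono le_rfl ha)
    (auxInt hAmono ha hab)).symm

lemma auxTmono (hApos : ∀ t : ℝ, 1 ≤ t → 0 < A t) (hAmono : MonotoneOn A (Set.Ici 1))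
    (hT : ∀ r : ℝ, T r = ∫ t in (1:ℝ)..r, A t / t) :
    MonotoneOn T (Set.Ici 1) := by
  intro x hx y hy hxy
  rw [auxTdiff hAmono hT hx hxy]
  have : 0 ≤ ∫ t in x..y, A t / t := by
    apply intervalIntegral.integral_nonneg hxy
    intro u hu
    have h1u : (1:ℝ) ≤ u := le_trans hx hu.1
    exact div_nonneg (hApos u h1u).le (by linarith)
  linarith

/-- Lower bound: `A s * (log u - log s) ≤ T u - T s`. -/
lemma auxLower (hApos : ∀ t : ℝ, 1 ≤ t → 0 < A t) (hAmono : MonotoneOn A (Set.Ici 1))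
    (hT : ∀ r : ℝ, T r = ∫ t in (1:ℝ)..r, A t / t) {s u : ℝ} (hs : 1 ≤ s) (hsu : s ≤ u) :
    A s * (Real.log u - Real.log s) ≤ T u - T s := by
  have hdiff := auxTdiff hAmono hT hs hsu
  have hs0 : (0:ℝ) < s := lt_of_lt_of_le one_pos hs
  have hu0 : (0:ℝ) < u := lt_of_lt_of_le hs0 hsu
  have hmono : ∫ t in s..u, A s * t⁻¹ ≤ ∫ t in s..u, A t / t := by
    apply intervalIntegral.integral_mono_on hsu
    · exact (intervalIntegrable_const.mul_continuousOn (by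
        apply ContinuousOn.inv₀ continuousOn_id
        intro x hx
        rw [Set.uIcc_of_le hsu] at hx
        have : (1:ℝ) ≤ x := le_trans hs hx.1
        positivity))
    · exact auxInt hAmono hs hsu
    · intro x hx
      have hx1 : (1:ℝ) ≤ x := le_trans hs hx.1
      rw [div_eq_mul_inv]
      apply mul_le_mul_of_nonneg_right (hAmono hs (le_trans hs hx.1) hx.1)
      positivity
  have hconst : ∫ t in s..u, A s * t⁻¹ = A s * (Real.log u - Real.log s) := by
    rw [intervalIntegral.integral_const_mul, integral_inv_of_pos hs0 hu0,
      Real.log_div (ne_of_gt hu0) (ne_of_gt hs0)]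
  linarith [hconst ▸ hmono]

/-- Upper bound for a shift: `T (r+h) - T r ≤ A (r+h) * r⁻¹ * h`. -/
lemma auxUpper (hApos : ∀ t : ℝ, 1 ≤ t → 0 < A t) (hAmono : MonotoneOn A (Set.Ici 1))
    (hT : ∀ r : ℝ, T r = ∫ t in (1:ℝ)..r, A t / t) {r h : ℝ} (hr : 1 ≤ r) (hh : 0 ≤ h) :
    T (r + h) - T r ≤ A (r + h) * r⁻¹ * h := by
  have hrh : r ≤ r + h := by linarith
  have hdiff := auxTdiff hAmono hT hr hrh
  have hr0 : (0:ℝ) < r := lt_of_lt_of_le one_pos hr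
  have hmono : ∫ t in r..(r+h), A t / t ≤ ∫ t in r..(r+h), A (r+h) * r⁻¹ := by
    apply intervalIntegral.integral_mono_on hrh (auxInt hAmono hr hrh) intervalIntegrable_const
    intro x hx
    have hx1 : (1:ℝ) ≤ x := le_trans hr hx.1
    have hx0 : (0:ℝ) < x := lt_of_lt_of_le one_pos hx1
    rw [div_eq_mul_inv]
    have h1 : A x ≤ A (r + h) := hAmono (Set.mem_Ici.mpr hx1) (Set.mem_Ici.mpr (by linarith)) hx.2
    have h2 : x⁻¹ ≤ r⁻¹ := by
      apply inv_anti₀ hr0 hx.1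
    have h3 : 0 ≤ A x := (hApos x hx1).le
    calc A x * x⁻¹ ≤ A (r+h) * x⁻¹ := by
          apply mul_le_mul_of_nonneg_right h1; positivity
      _ ≤ A (r+h) * r⁻¹ := by
          apply mul_le_mul_of_nonneg_left h2
          exact le_trans h3 h1
  have hconst : ∫ t in r..(r+h), A (r+h) * r⁻¹ = A (r+h) * r⁻¹ * h := by
    rw [intervalIntegral.integral_const, smul_eq_mul]
    ring
  linarith [hconst ▸ hmono]

end GrowthAux

theorem growth_lemma_finite_order_fixed_shift
    (A : ℝ → ℝ) (hApos : ∀ t : ℝ, 1 ≤ t → 0 < A t) (hAmono : MonotoneOn A (Set.Ici 1))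
    (T : ℝ → ℝ) (hT : ∀ r : ℝ, T r = ∫ t in (1:ℝ)..r, A t / t)
    (htop : Filter.Tendsto T Filter.atTop Filter.atTop)
    (ρ : ℝ)
    (hbdd : Filter.IsBoundedUnder (· ≤ ·) Filter.atTop (fun r => Real.log (T r) / Real.log r))
    (hρ : Filter.limsup (fun r => Real.log (T r) / Real.log r) Filter.atTop = ρ)
    (h K : ℝ) (hh : 0 < h) (hK : 1 < K) :
    ∃ E : Set ℝ, E ⊆ Set.Ici 1 ∧
      Filter.limsup (fun r => (∫ t in E ∩ Set.Icc 1 r, t⁻¹) / Real.log r) Filter.atTop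
        ≤ ρ * Real.log 2 / Real.log K ∧
      ∃ R₀ : ℝ, ∀ r : ℝ, R₀ ≤ r → r ∉ E → T (r + h) ≤ T r + 4 * h * K * T r / r := by
  have hK0 : (0:ℝ) < Real.log K := Real.log_pos hK
  have hlog2 : (0:ℝ) < Real.log 2 := Real.log_pos one_lt_two
  have hlog2half : (1:ℝ)/2 < Real.log 2 := by
    have := Real.log_two_gt_d9; linarith
  obtain ⟨M, hM⟩ := eventually_atTop.1 (htop.eventually_ge_atTop 1)
  set R₁ : ℝ := max (max 1 (3*h)) M with hR₁def
  have hR11 : (1:ℝ) ≤ R₁ := le_trans (le_max_left 1 (3*h)) (le_max_left _ _)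
  have hR1h : 3*h ≤ R₁ := le_trans (le_max_right 1 (3*h)) (le_max_left _ _)
  have hR1M : M ≤ R₁ := le_max_right _ _
  have hR10 : (0:ℝ) < R₁ := lt_of_lt_of_le one_pos hR11
  have hT1 : ∀ r : ℝ, R₁ ≤ r → 1 ≤ T r := fun r hr => hM r (le_trans hR1M hr)
  have Tmono : MonotoneOn T (Set.Ici 1) := auxTmono hApos hAmono hT
  set T' : ℝ → ℝ := fun r => T (max r 1) with hT'def
  have hT'mono : Monotone T' := by
    intro x y hxy
    exact Tmono (Set.mem_Ici.mpr (le_max_right x 1)) (Set.mem_Ici.mpr (le_max_right y 1))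
      (max_le_max hxy le_rfl)
  have hT'eq : ∀ r : ℝ, 1 ≤ r → T' r = T r := by
    intro r hr; simp only [hT'def]; rw [max_eq_left hr]
  set E : Set ℝ := Set.Ici R₁ ∩ {r : ℝ | K * T' r < T' (2*r)} with hEdef
  have hEmeas : MeasurableSet E := by
    apply measurableSet_Ici.inter
    exact measurableSet_lt (hT'mono.measurable.const_mul K)
      (hT'mono.measurable.comp (measurable_id.const_mul 2))
  have hEsub : E ⊆ Set.Ici 1 := fun x hx => le_trans hR11 hx.1
  refine ⟨E, hEsub, ?_, R₁, ?_⟩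
  · -- DENSITY BOUND
    set L : ℝ → ℝ := fun t => Real.log (T t) with hLdef
    have hLmono : MonotoneOn L (Set.Ici R₁) := by
      intro x hx y hy hxy
      exact Real.log_le_log (lt_of_lt_of_le one_pos (hT1 x hx))
        (Tmono (Set.mem_Ici.mpr (le_trans hR11 hx)) (Set.mem_Ici.mpr (le_trans hR11 hy)) hxy)
    have hLnn : ∀ t : ℝ, R₁ ≤ t → 0 ≤ L t := fun t ht => Real.log_nonneg (hT1 t ht)
    have hcont_inv : ∀ {a b : ℝ}, R₁ ≤ a → a ≤ b → ContinuousOn (fun t : ℝ => t⁻¹) (Set.uIcc a b) := by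
      intro a b ha hab
      apply ContinuousOn.inv₀ continuousOn_id
      intro x hx
      rw [Set.uIcc_of_le hab] at hx
      have : R₁ ≤ x := le_trans ha hx.1
      exact ne_of_gt (lt_of_lt_of_le hR10 this)
    have hLint : ∀ a b : ℝ, R₁ ≤ a → a ≤ b → IntervalIntegrable (fun u => L u * u⁻¹) volume a b := by
      intro a b ha hab
      have hsub : Set.uIcc a b ⊆ Set.Ici R₁ := by
        rw [Set.uIcc_of_le hab]; exact fun x hx => le_trans ha hx.1
      exact ((hLmono.mono hsub).intervalIntegrable).mul_continuousOn (hcont_inv ha hab)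
    have hL2int : ∀ a b : ℝ, R₁ ≤ a → a ≤ b →
        IntervalIntegrable (fun u => L (2*u) * u⁻¹) volume a b := by
      intro a b ha hab
      have hm : MonotoneOn (fun u => L (2*u)) (Set.uIcc a b) := by
        intro x hx y hy hxy
        rw [Set.uIcc_of_le hab] at hx hy
        have hx1 : R₁ ≤ x := le_trans ha hx.1
        have hy1 : R₁ ≤ y := le_trans ha hy.1
        exact hLmono (Set.mem_Ici.mpr (by linarith)) (Set.mem_Ici.mpr (by linarith)) (by linarith)
      exact hm.intervalIntegrable.mul_continuousOn (hcont_inv ha hab)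
    have key : ∀ r : ℝ, R₁ ≤ r →
        (∫ t in E ∩ Set.Icc 1 r, t⁻¹) * Real.log K ≤ L (2*r) * Real.log 2 := by
      intro r hr
      set S : Set ℝ := E ∩ Set.Icc 1 r with hSdef
      have hSmeas : MeasurableSet S := hEmeas.inter measurableSet_Icc
      have hSsub : S ⊆ Set.Icc R₁ r := fun x hx => ⟨hx.1.1, hx.2.2⟩
      set g : ℝ → ℝ := fun t => (L (2*t) - L t) * t⁻¹ with hgdef
      have hgeq : g = fun x => L (2*x) * x⁻¹ - L x * x⁻¹ := by
        funext x; simp only [hgdef]; ring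
      have hgint : IntervalIntegrable g volume R₁ r := by
        rw [hgeq]; exact (hL2int R₁ r le_rfl hr).sub (hLint R₁ r le_rfl hr)
      have hgIcc : IntegrableOn g (Set.Icc R₁ r) volume :=
        (intervalIntegrable_iff_integrableOn_Icc_of_le hr).1 hgint
      have hgnn : ∀ t ∈ Set.Icc R₁ r, 0 ≤ g t := by
        intro t ht
        have ht1 : R₁ ≤ t := ht.1
        have htpos : 0 < t := lt_of_lt_of_le hR10 ht1
        have hmL : L t ≤ L (2*t) := hLmono (Set.mem_Ici.mpr ht1)
          (Set.mem_Ici.mpr (show R₁ ≤ 2*t by linarith)) (show t ≤ 2*t by linarith)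
        have h2 : 0 ≤ L (2*t) - L t := by linarith
        exact mul_nonneg h2 (by positivity)
      have hint1 : IntegrableOn (fun t : ℝ => Real.log K * t⁻¹) S volume := by
        have hc : ContinuousOn (fun t : ℝ => Real.log K * t⁻¹) (Set.Icc 1 r) := by
          apply continuousOn_const.mul (ContinuousOn.inv₀ continuousOn_id ?_)
          intro x hx; have := hx.1; positivity
        exact hc.integrableOn_Icc.mono_set (fun x hx => hx.2)
      have hint2 : IntegrableOn g S volume := hgIcc.mono_set hSsub
      have step1 : ∫ t in S, Real.log K * t⁻¹ ≤ ∫ t in S, g t := by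
        apply setIntegral_mono_on hint1 hint2 hSmeas
        intro x hx
        obtain ⟨⟨hxR, hxlt⟩, hx1, hxr⟩ := hx
        have hx1' : (1:ℝ) ≤ x := hx1
        have hxpos : (0:ℝ) < x := by linarith
        have hTx : 1 ≤ T x := hT1 x hxR
        simp only [Set.mem_setOf_eq] at hxlt
        rw [hT'eq x hx1', hT'eq (2*x) (by linarith)] at hxlt
        have hlogK : Real.log K ≤ L (2*x) - L x := by
          have h1 : Real.log (K * T x) ≤ Real.log (T (2*x)) :=
            Real.log_le_log (by positivity) hxlt.le
          rw [Real.log_mul (by positivity) (by positivity)] at h1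
          have hLx : L x = Real.log (T x) := rfl
          have hL2x : L (2*x) = Real.log (T (2*x)) := rfl
          rw [hLx, hL2x]; linarith
        exact mul_le_mul_of_nonneg_right hlogK (by positivity)
      have step2 : ∫ t in S, g t ≤ ∫ t in Set.Icc R₁ r, g t := by
        apply setIntegral_mono_set hgIcc
        · exact (ae_restrict_iff' measurableSet_Icc).2
            (Filter.Eventually.of_forall (fun x hx => hgnn x hx))
        · exact HasSubset.Subset.eventuallyLE hSsub
      have step3 : ∫ t in Set.Icc R₁ r, g t = ∫ t in R₁..r, g t := by
        rw [intervalIntegral.integral_of_le hr, MeasureTheory.integral_Icc_eq_integral_Ioc]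
      have step4 : ∫ t in R₁..r, g t
          = (∫ t in R₁..r, L (2*t) * t⁻¹) - ∫ t in R₁..r, L t * t⁻¹ := by
        rw [← intervalIntegral.integral_sub (hL2int R₁ r le_rfl hr) (hLint R₁ r le_rfl hr)]
        apply intervalIntegral.integral_congr
        intro x _
        simp only [hgdef]; ring
      have step5 : ∫ t in R₁..r, L (2*t) * t⁻¹ = ∫ u in (2*R₁)..(2*r), L u * u⁻¹ := by
        have hcomp := intervalIntegral.integral_comp_mul_left (a := R₁) (b := r) (fun u => L u * u⁻¹)
          (two_ne_zero (α := ℝ))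
        have heq : ∀ x ∈ Set.uIcc R₁ r, L (2*x) * (2*x)⁻¹ = 2⁻¹ * (L (2*x) * x⁻¹) := by
          intro x _; rw [mul_inv]; ring
        rw [intervalIntegral.integral_congr heq, intervalIntegral.integral_const_mul,
          smul_eq_mul] at hcomp
        have h2 : (2:ℝ)⁻¹ ≠ 0 := by norm_num
        exact mul_left_cancel₀ h2 hcomp
      have h2R : R₁ ≤ 2*R₁ := by linarith
      have h2Rr : 2*R₁ ≤ 2*r := by linarith
      have hRr2 : r ≤ 2*r := by linarith [lt_of_lt_of_le hR10 hr]
      have splitA : (∫ t in R₁..(2*R₁), L t * t⁻¹) + ∫ t in (2*R₁)..(2*r), L t * t⁻¹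
          = ∫ t in R₁..(2*r), L t * t⁻¹ :=
        intervalIntegral.integral_add_adjacent_intervals (hLint _ _ le_rfl h2R)
          (hLint _ _ h2R h2Rr)
      have splitB : (∫ t in R₁..r, L t * t⁻¹) + ∫ t in r..(2*r), L t * t⁻¹
          = ∫ t in R₁..(2*r), L t * t⁻¹ :=
        intervalIntegral.integral_add_adjacent_intervals (hLint _ _ le_rfl hr) (hLint _ _ hr hRr2)
      have hnn1 : 0 ≤ ∫ t in R₁..(2*R₁), L t * t⁻¹ := by
        apply intervalIntegral.integral_nonneg h2R
        intro u hu
        have hu1 : R₁ ≤ u := hu.1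
        have : 0 < u := lt_of_lt_of_le hR10 hu1
        exact mul_nonneg (hLnn u hu1) (by positivity)
      have hub : ∫ t in r..(2*r), L t * t⁻¹ ≤ L (2*r) * Real.log 2 := by
        have hr0 : (0:ℝ) < r := lt_of_lt_of_le hR10 hr
        have hmono2 : ∫ t in r..(2*r), L t * t⁻¹ ≤ ∫ t in r..(2*r), L (2*r) * t⁻¹ := by
          apply intervalIntegral.integral_mono_on hRr2 (hLint _ _ hr hRr2)
          · exact intervalIntegrable_const.mul_continuousOn (hcont_inv hr hRr2)
          · intro x hx
            have hx1 : R₁ ≤ x := le_trans hr hx.1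
            have hx0 : (0:ℝ) < x := lt_of_lt_of_le hR10 hx1
            exact mul_le_mul_of_nonneg_right
              (hLmono (Set.mem_Ici.mpr hx1) (Set.mem_Ici.mpr (le_trans hx1 hx.2)) hx.2)
              (by positivity)
        have hconst2 : ∫ t in r..(2*r), L (2*r) * t⁻¹ = L (2*r) * Real.log 2 := by
          rw [intervalIntegral.integral_const_mul, integral_inv_of_pos hr0 (by linarith)]
          congr 1
          rw [show (2*r)/r = 2 by field_simp]
        linarith [hconst2 ▸ hmono2]
      have hSint : ∫ t in S, Real.log K * t⁻¹ = Real.log K * ∫ t in S, t⁻¹ :=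
        MeasureTheory.integral_const_mul _ _
      have final : (∫ t in S, t⁻¹) * Real.log K ≤ L (2*r) * Real.log 2 := by
        have c1 : (∫ t in S, t⁻¹) * Real.log K = ∫ t in S, Real.log K * t⁻¹ := by
          rw [hSint]; ring
        rw [c1]
        calc ∫ t in S, Real.log K * t⁻¹ ≤ ∫ t in S, g t := step1
          _ ≤ ∫ t in Set.Icc R₁ r, g t := step2
          _ = (∫ u in (2*R₁)..(2*r), L u * u⁻¹) - ∫ t in R₁..r, L t * t⁻¹ := by
              rw [step3, step4, step5]
          _ ≤ L (2*r) * Real.log 2 := by linarith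
      exact final
    -- limsup part
    have hf0 : ∀ᶠ r in atTop, 0 ≤ (∫ t in E ∩ Set.Icc 1 r, t⁻¹) / Real.log r := by
      filter_upwards [eventually_ge_atTop (3:ℝ)] with r hr3
      have hlogr : 0 < Real.log r := Real.log_pos (by linarith)
      have hnn : 0 ≤ ∫ t in E ∩ Set.Icc 1 r, t⁻¹ := by
        apply setIntegral_nonneg (hEmeas.inter measurableSet_Icc)
        intro x hx
        have : (1:ℝ) ≤ x := hx.2.1
        positivity
      positivity
    have hcob : IsCoboundedUnder (· ≤ ·) atTop
        (fun r => (∫ t in E ∩ Set.Icc 1 r, t⁻¹) / Real.log r) :=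
      (isBoundedUnder_of_eventually_ge hf0).isCoboundedUnder_le
    have h1 : Tendsto (fun r : ℝ => Real.log (2*r) / Real.log r) atTop (nhds 1) := by
      have h3 := (Real.tendsto_log_atTop.inv_tendsto_atTop).const_mul (Real.log 2)
      have h2 : Tendsto (fun r : ℝ => Real.log 2 * (Real.log r)⁻¹ + 1) atTop (nhds 1) := by
        have := h3.add_const 1
        simpa using this
      apply h2.congr'
      filter_upwards [eventually_ge_atTop (2:ℝ)] with r hr2
      have hr0 : (0:ℝ) < r := by linarith
      have hlr : Real.log r ≠ 0 := ne_of_gt (Real.log_pos (by linarith))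
      rw [Real.log_mul two_ne_zero (ne_of_gt hr0)]
      field_simp
    have main : ∀ ε : ℝ, 0 < ε →
        limsup (fun r => (∫ t in E ∩ Set.Icc 1 r, t⁻¹) / Real.log r) atTop
          ≤ (ρ + ε) * Real.log 2 / Real.log K := by
      intro ε hε
      have hev : ∀ᶠ u in atTop, Real.log (T u) / Real.log u < ρ + ε := by
        apply eventually_lt_of_limsup_lt _ hbdd
        rw [hρ]; linarith
      obtain ⟨s₀, hs₀⟩ := eventually_atTop.1 hev
      set c : ℝ := (ρ + ε) * Real.log 2 / Real.log K with hcdef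
      have htendRHS : Tendsto (fun r : ℝ => c * (Real.log (2*r) / Real.log r)) atTop (nhds c) := by
        have := tendsto_const_nhds (x := c) (f := atTop (α := ℝ)) |>.mul h1
        simpa using this
      have hbound : (fun r => (∫ t in E ∩ Set.Icc 1 r, t⁻¹) / Real.log r)
          ≤ᶠ[atTop] fun r => c * (Real.log (2*r) / Real.log r) := by
        filter_upwards [eventually_ge_atTop (max (max R₁ s₀) 3)] with r hr
        have hrR : R₁ ≤ r := le_trans (le_trans (le_max_left _ _) (le_max_left _ _)) hr
        have hr3 : (3:ℝ) ≤ r := le_trans (le_max_right _ _) hr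
        have hrs : s₀ ≤ 2*r := by
          have : s₀ ≤ r := le_trans (le_trans (le_max_right _ _) (le_max_left _ _)) hr
          linarith
        have hlogr : 0 < Real.log r := Real.log_pos (by linarith)
        have hlog2r : 0 < Real.log (2*r) := Real.log_pos (by linarith)
        have hkey := key r hrR
        have hL2r : Real.log (T (2*r)) ≤ (ρ + ε) * Real.log (2*r) := by
          have h5 := hs₀ (2*r) hrs
          rw [div_lt_iff₀ hlog2r] at h5
          linarith
        have hint_le : (∫ t in E ∩ Set.Icc 1 r, t⁻¹)
            ≤ (ρ+ε) * Real.log (2*r) * Real.log 2 / Real.log K := by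
          have h4 : (∫ t in E ∩ Set.Icc 1 r, t⁻¹) * Real.log K
              ≤ (ρ+ε) * Real.log (2*r) * Real.log 2 := by
            apply le_trans hkey
            exact mul_le_mul_of_nonneg_right hL2r hlog2.le
          exact (le_div_iff₀ hK0).2 h4
        have heqc : c * (Real.log (2*r) / Real.log r)
            = ((ρ+ε) * Real.log (2*r) * Real.log 2 / Real.log K) / Real.log r := by
          rw [hcdef]; field_simp
        rw [heqc]
        gcongr
      calc limsup (fun r => (∫ t in E ∩ Set.Icc 1 r, t⁻¹) / Real.log r) atTop
          ≤ limsup (fun r : ℝ => c * (Real.log (2*r) / Real.log r)) atTop :=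
            limsup_le_limsup hbound hcob htendRHS.isBoundedUnder_le
        _ = c := htendRHS.limsup_eq
    apply le_of_forall_pos_le_add
    intro δ hδ
    have hε : 0 < δ * Real.log K / Real.log 2 := by positivity
    have hm := main _ hε
    have heqfin : (ρ + δ * Real.log K / Real.log 2) * Real.log 2 / Real.log K
        = ρ * Real.log 2 / Real.log K + δ := by
      field_simp
    rw [heqfin] at hm
    exact hm
  · -- GROWTH BOUND
    intro r hr hrE
    have hr1 : (1:ℝ) ≤ r := le_trans hR11 hr
    have hr0 : (0:ℝ) < r := lt_of_lt_of_le one_pos hr1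
    have hnot : ¬ (K * T' r < T' (2*r)) := fun hc => hrE ⟨hr, hc⟩
    rw [hT'eq r hr1, hT'eq (2*r) (by linarith)] at hnot
    have hT2r : T (2*r) ≤ K * T r := not_lt.1 hnot
    set s : ℝ := Real.sqrt 2 * r with hsdef
    have hs43 : (4/3 : ℝ) ≤ Real.sqrt 2 :=
      (Real.le_sqrt (by norm_num) (by norm_num)).mpr (by norm_num)
    have hs2 : Real.sqrt 2 ≤ 2 := by
      nlinarith [Real.sq_sqrt (by norm_num : (0:ℝ) ≤ 2), Real.sqrt_nonneg 2]
    have hrh : 3*h ≤ r := le_trans hR1h hr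
    have hrh_le_s : r + h ≤ s := by
      have h1 : (4/3:ℝ)*r ≤ s := by
        rw [hsdef]; exact mul_le_mul_of_nonneg_right hs43 hr0.le
      linarith
    have hs_le_2r : s ≤ 2*r := by
      rw [hsdef]; exact mul_le_mul_of_nonneg_right hs2 hr0.le
    have hs1 : (1:ℝ) ≤ s := by linarith
    have hRs : R₁ ≤ s := by linarith
    have e1 : T (r + h) - T r ≤ A (r+h) * r⁻¹ * h := auxUpper hApos hAmono hT hr1 hh.le
    have e2 : A (r+h) ≤ A s :=
      hAmono (Set.mem_Ici.mpr (by linarith)) (Set.mem_Ici.mpr hs1) hrh_le_s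
    have e3 : A s * (Real.log (2*r) - Real.log s) ≤ T (2*r) - T s :=
      auxLower hApos hAmono hT hs1 hs_le_2r
    have e4 : Real.log (2*r) - Real.log s = Real.log 2 / 2 := by
      rw [hsdef, Real.log_mul two_ne_zero (ne_of_gt hr0),
        Real.log_mul (ne_of_gt (lt_of_lt_of_le (by norm_num) hs43)) (ne_of_gt hr0),
        Real.log_sqrt (by norm_num)]
      ring
    have e6 : 1 ≤ T s := hT1 s hRs
    have e7 : 1 ≤ T r := hT1 r hr
    have hAs : A s * Real.log 2 ≤ 2 * (K * T r) := by
      rw [e4] at e3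
      have e5 : A s * (Real.log 2 / 2) = (A s * Real.log 2) / 2 := by ring
      linarith
    have hApos_s : 0 < A s := hApos s hs1
    have hAs4 : A s ≤ 4 * (K * T r) := by
      have h6 : A s * (1/2) < A s * Real.log 2 :=
        mul_lt_mul_of_pos_left hlog2half hApos_s
      linarith
    have e8 : A (r+h) * r⁻¹ * h ≤ 4 * (K * T r) * r⁻¹ * h := by
      have h9 : (0:ℝ) ≤ r⁻¹ * h := by positivity
      have h10 := mul_le_mul_of_nonneg_right (le_trans e2 hAs4) h9
      calc A (r+h) * r⁻¹ * h = A (r+h) * (r⁻¹ * h) := by ring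
        _ ≤ 4*(K*T r) * (r⁻¹*h) := h10
        _ = 4 * (K * T r) * r⁻¹ * h := by ring
    have e9 : 4 * (K * T r) * r⁻¹ * h = 4 * h * K * T r / r := by
      rw [div_eq_mul_inv]; ring
    linarith [e9 ▸ e8]
end

section
/- Let T : [1,∞) → ℝ be non-decreasing with T(r) > e for all r ≥ 1 and T(r) → ∞ as r → ∞, and let ε > 0. Then there exists a set E_ε ⊆ [1,∞) of finite logarithmic measure such that T( r·exp( 1/( log T(r) · (log log T(r))^{1+ε} ) ) ) ≤ e·T(r) for all r ∉ E_ε; in particular, T(r + φ_ε(r)) ≤ e·T(r) for all r ∉ E_ε, where φ_ε(r) = r/((log log T(r))^{1+ε} · log T(r)). -/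
open MeasureTheory Filter Metric

namespace BorelGrowthAux
lemma exp_sub_one_le {x : ℝ} (_hx : 0 ≤ x) : Real.exp x - 1 ≤ x * Real.exp x := by
  have h := Real.add_one_le_exp (-x)
  rw [Real.exp_neg] at h
  have hp := Real.exp_pos x
  have h2 : (Real.exp x)⁻¹ * Real.exp x = 1 := inv_mul_cancel₀ hp.ne'
  nlinarith

open scoped Classical in
noncomputable def pickNear (s : Set ℝ) (c : ℝ) : ℝ :=
  if h : s.Nonempty ∧ 0 < c then
    Classical.choose (exists_lt_of_csInf_lt h.1 (lt_add_of_pos_right _ h.2))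
  else 0

lemma pickNear_spec {s : Set ℝ} {c : ℝ} (hs : s.Nonempty) (hc : 0 < c) :
    pickNear s c ∈ s ∧ pickNear s c ≤ sInf s + c := by
  rw [pickNear, dif_pos ⟨hs, hc⟩]
  obtain ⟨h1, h2⟩ := Classical.choose_spec
    (exists_lt_of_csInf_lt hs (lt_add_of_pos_right (sInf s) hc))
  exact ⟨h1, h2.le⟩

open scoped Classical in
noncomputable def bseq (E : Set ℝ) (δ : ℝ → ℝ) : ℕ → ℝ
  | 0 => 1
  | n + 1 =>
    if (E ∩ Set.Ici (bseq E δ n)).Nonempty then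
      pickNear (E ∩ Set.Ici (bseq E δ n)) ((2 : ℝ) ^ n)⁻¹ *
        Real.exp (δ (pickNear (E ∩ Set.Ici (bseq E δ n)) ((2 : ℝ) ^ n)⁻¹))
    else bseq E δ n + 1

noncomputable def bpt (E : Set ℝ) (δ : ℝ → ℝ) (n : ℕ) : ℝ :=
  pickNear (E ∩ Set.Ici (bseq E δ n)) ((2 : ℝ) ^ n)⁻¹

open scoped Classical in
lemma bseq_succ (E : Set ℝ) (δ : ℝ → ℝ) (n : ℕ) :
    bseq E δ (n + 1) =
      if (E ∩ Set.Ici (bseq E δ n)).Nonempty then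
        bpt E δ n * Real.exp (δ (bpt E δ n))
      else bseq E δ n + 1 := by
  rw [bseq, bpt]

lemma bseq_zero (E : Set ℝ) (δ : ℝ → ℝ) : bseq E δ 0 = 1 := by rw [bseq]

lemma summable_bertrand {p : ℝ} (hp : 1 < p) :
    Summable (fun n : ℕ => (((n : ℝ) + 1) * Real.log ((n : ℝ) + 1) ^ p)⁻¹) := by
  have hp0 : (0:ℝ) ≤ p := by linarith
  set f : ℕ → ℝ := fun n => (((n : ℝ) + 1) * Real.log ((n : ℝ) + 1) ^ p)⁻¹ with hf
  have hnonneg : ∀ n, 0 ≤ f n := by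
    intro n
    apply inv_nonneg.2
    exact mul_nonneg (by positivity)
      (Real.rpow_nonneg (Real.log_nonneg (by linarith [Nat.cast_nonneg (α := ℝ) n])) p)
  have hA : ∀ ⦃m n : ℕ⦄, 0 < m → m ≤ n → f n ≤ f m := by
    intro m n hm hmn
    have h1 : (1:ℝ) ≤ (m:ℝ) := by exact_mod_cast hm
    have hlogm : 0 < Real.log ((m:ℝ) + 1) := Real.log_pos (by linarith)
    have hmn' : ((m:ℝ) + 1) ≤ (n:ℝ) + 1 := by
      have : (m:ℝ) ≤ (n:ℝ) := by exact_mod_cast hmn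
      linarith
    apply inv_anti₀ (mul_pos (by linarith) (Real.rpow_pos_of_pos hlogm p))
    exact mul_le_mul hmn'
      (Real.rpow_le_rpow hlogm.le (Real.log_le_log (by linarith) hmn') hp0)
      (Real.rpow_nonneg hlogm.le p) (by linarith)
  rw [← summable_condensed_iff_of_nonneg hnonneg hA]
  rw [← summable_nat_add_iff 1]
  have hlog2 : 0 < Real.log 2 := Real.log_pos one_lt_two
  have hg : Summable (fun k : ℕ => (((k:ℝ) + 1) * Real.log 2) ^ (-p)) := by
    have h1 : Summable (fun k : ℕ => ((k:ℝ) + 1) ^ (-p)) := by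
      have h0 : Summable (fun n : ℕ => (n:ℝ) ^ (-p)) :=
        Real.summable_nat_rpow.mpr (by linarith)
      have h2 := (summable_nat_add_iff 1).mpr h0
      refine h2.congr fun k => ?_
      push_cast
      ring_nf
    have h3 := h1.mul_right (Real.log 2 ^ (-p))
    refine h3.congr fun k => ?_
    rw [← Real.mul_rpow (by positivity) hlog2.le]
  apply Summable.of_nonneg_of_le (fun k => mul_nonneg (by positivity) (hnonneg _)) (fun k => ?_) hg
  -- bound: 2^(k+1) * f (2^(k+1)) ≤ (((k:ℝ)+1) * log 2)^(-p)
  have hA2 : (0:ℝ) < 2 ^ (k+1) := by positivity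
  have hcast : ((2 ^ (k+1) : ℕ) : ℝ) = 2 ^ (k+1) := by push_cast; ring
  have hlogpos : 0 < ((k:ℝ) + 1) * Real.log 2 := by positivity
  have hlog : ((k:ℝ) + 1) * Real.log 2 ≤ Real.log ((2:ℝ) ^ (k+1) + 1) := by
    have h1 : Real.log ((2:ℝ) ^ (k+1)) = ((k:ℝ)+1) * Real.log 2 := by
      rw [Real.log_pow]; push_cast; ring
    rw [← h1]
    exact Real.log_le_log hA2 (by linarith)
  have hden : ((2:ℝ) ^ (k+1)) * (((k:ℝ) + 1) * Real.log 2) ^ p ≤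
      (((2 ^ (k+1) : ℕ) : ℝ) + 1) * Real.log (((2 ^ (k+1) : ℕ) : ℝ) + 1) ^ p := by
    rw [hcast]
    exact mul_le_mul (by linarith)
      (Real.rpow_le_rpow hlogpos.le hlog hp0)
      (Real.rpow_nonneg hlogpos.le p) (by positivity)
  have h1 : f (2 ^ (k+1)) ≤ (((2:ℝ) ^ (k+1)) * (((k:ℝ) + 1) * Real.log 2) ^ p)⁻¹ :=
    inv_anti₀ (mul_pos hA2 (Real.rpow_pos_of_pos hlogpos p)) hden
  calc (2:ℝ) ^ (k+1) * f (2 ^ (k+1))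
      ≤ (2:ℝ) ^ (k+1) * (((2:ℝ) ^ (k+1)) * (((k:ℝ) + 1) * Real.log 2) ^ p)⁻¹ := by
        exact mul_le_mul_of_nonneg_left h1 hA2.le
    _ = ((((k:ℝ) + 1) * Real.log 2) ^ p)⁻¹ := by
        rw [mul_inv]
        rw [← mul_assoc, mul_inv_cancel₀ hA2.ne', one_mul]
    _ = (((k:ℝ) + 1) * Real.log 2) ^ (-p) := (Real.rpow_neg hlogpos.le p).symm


theorem borel_core (T δ : ℝ → ℝ) (C : ℝ) (g : ℕ → ℝ)
    (hmono : MonotoneOn T (Set.Ici 1))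
    (hTe : ∀ r, 1 ≤ r → Real.exp 1 < T r)
    (hδpos : ∀ r, 1 ≤ r → 0 < δ r)
    (hC : ∀ r, 1 ≤ r → δ r ≤ C)
    (hg : Summable g) (hg0 : ∀ n, 0 ≤ g n)
    (hgbd : ∀ (n : ℕ) (r : ℝ), 1 ≤ r → ((n:ℝ) + 1) ≤ Real.log (T r) → δ r ≤ g n) :
    FiniteLogMeasure {r | 1 ≤ r ∧ Real.exp 1 * T r < T (r * Real.exp (δ r))} := by
  classical
  set E := {r | 1 ≤ r ∧ Real.exp 1 * T r < T (r * Real.exp (δ r))} with hE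
  set t : ℕ → ℝ := bseq E δ with ht
  set y : ℕ → ℝ := bpt E δ with hy
  set N : ℕ → Prop := fun n => (E ∩ Set.Ici (t n)).Nonempty with hN
  have hT0 : ∀ r, 1 ≤ r → 0 < T r := fun r hr => (Real.exp_pos 1).trans (hTe r hr)
  have h2pos : ∀ n : ℕ, (0:ℝ) < ((2:ℝ) ^ n)⁻¹ := fun n => by positivity
  have h2le1 : ∀ n : ℕ, ((2:ℝ) ^ n)⁻¹ ≤ 1 := by
    intro n
    rw [inv_le_one₀ (by positivity)]
    exact one_le_pow₀ one_le_two
  have ht0 : t 0 = 1 := bseq_zero E δ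
  have htsucc : ∀ n, t (n+1) = if N n then y n * Real.exp (δ (y n)) else t n + 1 :=
    fun n => bseq_succ E δ n
  have hyspec : ∀ n, N n → (y n ∈ E ∧ t n ≤ y n ∧
      y n ≤ sInf (E ∩ Set.Ici (t n)) + ((2:ℝ) ^ n)⁻¹) := by
    intro n hn
    obtain ⟨h1, h2⟩ := pickNear_spec hn (h2pos n)
    exact ⟨h1.1, h1.2, h2⟩
  have ht1 : ∀ n, 1 ≤ t n := by
    intro n
    induction n with
    | zero => rw [ht0]
    | succ n ih =>
      rw [htsucc n]
      by_cases hn : N n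
      · rw [if_pos hn]
        obtain ⟨hyE, hty, _⟩ := hyspec n hn
        have hy1 : 1 ≤ y n := hyE.1
        have : 1 ≤ Real.exp (δ (y n)) := Real.one_le_exp (hδpos _ hy1).le
        nlinarith
      · rw [if_neg hn]; linarith
  have htstep : ∀ n, t n ≤ t (n+1) := by
    intro n
    rw [htsucc n]
    by_cases hn : N n
    · rw [if_pos hn]
      obtain ⟨hyE, hty, _⟩ := hyspec n hn
      have hy1 : 1 ≤ y n := hyE.1
      have h1 : 1 ≤ Real.exp (δ (y n)) := Real.one_le_exp (hδpos _ hy1).le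
      nlinarith
    · rw [if_neg hn]; linarith
  have htmono : Monotone t := monotone_nat_of_le_succ htstep
  have hNanti : ∀ m n : ℕ, m ≤ n → N n → N m := by
    intro m n hmn ⟨x, hx⟩
    exact ⟨x, hx.1, le_trans (htmono hmn) hx.2⟩
  have hbdd : ∀ n, BddBelow (E ∩ Set.Ici (t n)) :=
    fun n => ⟨t n, fun x hx => hx.2⟩
  -- growth of log T (y n)
  have hu : ∀ n, N n → ((n:ℝ) + 1) < Real.log (T (y n)) := by
    intro n
    induction n with
    | zero =>
      intro hn
      obtain ⟨hyE, _, _⟩ := hyspec 0 hn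
      have := Real.log_lt_log (Real.exp_pos 1) (hTe _ hyE.1)
      rw [Real.log_exp] at this
      push_cast
      linarith
    | succ n ih =>
      intro hn
      have hn' : N n := hNanti n (n+1) (by omega) hn
      have ihn := ih hn'
      obtain ⟨hyE, hty, _⟩ := hyspec n hn'
      obtain ⟨hyE', hty', _⟩ := hyspec (n+1) hn
      have hy1 : 1 ≤ y n := hyE.1
      have hy1' : 1 ≤ y (n+1) := hyE'.1
      have hgrow : Real.exp 1 * T (y n) < T (t (n+1)) := by
        rw [htsucc n, if_pos hn']
        exact hyE.2
      have hTle : T (t (n+1)) ≤ T (y (n+1)) := hmono (ht1 (n+1)) (le_trans (ht1 (n+1)) hty') hty'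
      have hpos : 0 < Real.exp 1 * T (y n) := mul_pos (Real.exp_pos 1) (hT0 _ hy1)
      have hlog := Real.log_lt_log hpos (lt_of_lt_of_le hgrow hTle)
      rw [Real.log_mul (Real.exp_ne_zero 1) (hT0 _ hy1).ne', Real.log_exp] at hlog
      push_cast
      linarith
  -- the majorant sequence
  set D : ℕ → ℝ := fun n => if N n then δ (y n) else 0 with hD
  have hD0 : ∀ n, 0 ≤ D n := by
    intro n
    simp only [hD]
    by_cases hn : N n
    · rw [if_pos hn]; exact (hδpos _ (hyspec n hn).1.1).le
    · rw [if_neg hn]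
  have hDbd : ∀ n, D n ≤ g n := by
    intro n
    simp only [hD]
    by_cases hn : N n
    · rw [if_pos hn]
      exact hgbd n (y n) (hyspec n hn).1.1 (hu n hn).le
    · rw [if_neg hn]; exact hg0 n
  have hDsum : Summable D := Summable.of_nonneg_of_le hD0 hDbd hg
  have hgeom : Summable (fun n : ℕ => ((2:ℝ) ^ n)⁻¹) := by
    simp_rw [← inv_pow]
    exact summable_geometric_of_lt_one (by norm_num) (by norm_num)
  set B : ℕ → ℝ := fun n => Real.exp C * (D n + ((2:ℝ) ^ n)⁻¹) with hB
  have hBsum : Summable B := (hDsum.add hgeom).mul_left _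
  have hB0 : ∀ n, 0 ≤ B n := by
    intro n
    simp only [hB]
    have := hD0 n
    have := (h2pos n).le
    positivity
  -- covering intervals
  set I : ℕ → Set ℝ := fun n =>
    if N n then Set.Icc (sInf (E ∩ Set.Ici (t n))) (t (n+1)) else (∅ : Set ℝ) with hI
  have hcover : E ⊆ ⋃ n, I n := by
    intro r hr
    have hr1 : 1 ≤ r := hr.1
    have hex : ∃ n, r < t (n+1) := by
      by_contra hcon
      push_neg at hcon
      have htn : ∀ n, t n ≤ r := by
        intro n
        cases n with
        | zero => rw [ht0]; exact hr1
        | succ m => exact hcon m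
      have hNall : ∀ n, N n := fun n => ⟨r, hr, htn n⟩
      have hyr : ∀ n, y n ≤ r + 1 := by
        intro n
        obtain ⟨_, _, h3⟩ := hyspec n (hNall n)
        have h4 : sInf (E ∩ Set.Ici (t n)) ≤ r := csInf_le (hbdd n) ⟨hr, htn n⟩
        have := h2le1 n
        linarith
      obtain ⟨n, hn⟩ := exists_nat_gt (Real.log (T (r + 1)))
      have h5 := hu n (hNall n)
      have hy1 : 1 ≤ y n := (hyspec n (hNall n)).1.1
      have h6 : T (y n) ≤ T (r + 1) :=
        hmono (Set.mem_Ici.mpr hy1) (Set.mem_Ici.mpr (by linarith)) (hyr n)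
      have h7 : Real.log (T (y n)) ≤ Real.log (T (r + 1)) :=
        Real.log_le_log (hT0 _ hy1) h6
      linarith
    have htnr : t (Nat.find hex) ≤ r := by
      rcases hk : Nat.find hex with _ | m
      · rw [ht0]; exact hr1
      · have := Nat.find_min hex (m := m) (by omega)
        exact not_lt.mp this
    have hNn : N (Nat.find hex) := ⟨r, hr, htnr⟩
    refine Set.mem_iUnion.2 ⟨Nat.find hex, ?_⟩
    simp only [hI]
    simp only [if_pos hNn]
    exact ⟨csInf_le (hbdd _) ⟨hr, htnr⟩, (Nat.find_spec hex).le⟩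
  -- measure bound for each interval
  have hIbd : ∀ n, (∫⁻ x in I n, ENNReal.ofReal x⁻¹) ≤ ENNReal.ofReal (B n) := by
    intro n
    by_cases hn : N n
    · have hIeq : I n = Set.Icc (sInf (E ∩ Set.Ici (t n))) (t (n+1)) := by
        simp only [hI]; simp only [if_pos hn]
      set a := sInf (E ∩ Set.Ici (t n)) with ha
      set b := t (n+1) with hb
      obtain ⟨hyE, hty, hyc⟩ := hyspec n hn
      have hy1 : 1 ≤ y n := hyE.1
      have ha1 : 1 ≤ a := le_csInf hn (fun x hx => le_trans (ht1 n) hx.2)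
      have hay : a ≤ y n := csInf_le (hbdd n) ⟨hyE, hty⟩
      have hbform : b = y n * Real.exp (δ (y n)) := by
        rw [hb, htsucc n, if_pos hn]
      set d := δ (y n) with hd
      set c := ((2:ℝ) ^ n)⁻¹ with hc
      have hd0 : 0 < d := hδpos _ hy1
      have hdC : d ≤ C := hC _ hy1
      have hc0 : 0 < c := h2pos n
      have hkey : Real.exp d - 1 ≤ d * Real.exp d := exp_sub_one_le hd0.le
      have heC : Real.exp d ≤ Real.exp C := Real.exp_le_exp.2 hdC
      have ha0 : 0 < a := by linarith
      have hreal : a⁻¹ * (b - a) ≤ Real.exp C * (d + c) := by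
        have hainv1 : a⁻¹ ≤ 1 := by
          rw [inv_le_one₀ ha0]; exact ha1
        have hainv0 : 0 ≤ a⁻¹ := by positivity
        have hb1 : b - a ≤ (a + c) * Real.exp d - a := by
          rw [hbform]
          have := mul_le_mul_of_nonneg_right hyc (Real.exp_pos d).le
          linarith
        have heq : a⁻¹ * ((a + c) * Real.exp d - a) = (Real.exp d - 1) + a⁻¹ * (c * Real.exp d) := by
          field_simp
          ring
        calc a⁻¹ * (b - a) ≤ a⁻¹ * ((a + c) * Real.exp d - a) :=
              mul_le_mul_of_nonneg_left hb1 hainv0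
          _ = (Real.exp d - 1) + a⁻¹ * (c * Real.exp d) := heq
          _ ≤ d * Real.exp d + 1 * (c * Real.exp d) := by
              have h8 : a⁻¹ * (c * Real.exp d) ≤ 1 * (c * Real.exp d) :=
                mul_le_mul_of_nonneg_right hainv1 (by positivity)
              linarith
          _ = (d + c) * Real.exp d := by ring
          _ ≤ (d + c) * Real.exp C := by
              apply mul_le_mul_of_nonneg_left heC
              linarith
          _ = Real.exp C * (d + c) := by ring
      have hDn : D n = d := by simp only [hD, if_pos hn, hd]
      calc (∫⁻ x in I n, ENNReal.ofReal x⁻¹)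
          ≤ ∫⁻ _x in I n, ENNReal.ofReal a⁻¹ := by
            apply setLIntegral_mono measurable_const
            intro x hx
            rw [hIeq] at hx
            exact ENNReal.ofReal_le_ofReal (inv_anti₀ ha0 hx.1)
        _ = ENNReal.ofReal a⁻¹ * volume (I n) := setLIntegral_const _ _
        _ = ENNReal.ofReal a⁻¹ * ENNReal.ofReal (b - a) := by
            rw [hIeq, Real.volume_Icc]
        _ = ENNReal.ofReal (a⁻¹ * (b - a)) := by
            rw [ENNReal.ofReal_mul (by positivity)]
        _ ≤ ENNReal.ofReal (Real.exp C * (d + c)) := ENNReal.ofReal_le_ofReal hreal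
        _ = ENNReal.ofReal (B n) := by simp only [hB]; simp only [hDn, hc]
    · have hIeq : I n = ∅ := by simp only [hI]; simp only [if_neg hn]
      rw [hIeq]
      simp only [Measure.restrict_empty, lintegral_zero_measure]
      exact zero_le
  calc (∫⁻ x in E, ENNReal.ofReal x⁻¹)
      ≤ ∫⁻ x in ⋃ n, I n, ENNReal.ofReal x⁻¹ := lintegral_mono_set hcover
    _ ≤ ∑' n, ∫⁻ x in I n, ENNReal.ofReal x⁻¹ := lintegral_iUnion_le _ _
    _ ≤ ∑' n, ENNReal.ofReal (B n) := ENNReal.tsum_le_tsum hIbd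
    _ = ENNReal.ofReal (∑' n, B n) := (ENNReal.ofReal_tsum_of_nonneg hB0 hBsum).symm
    _ < ⊤ := ENNReal.ofReal_lt_top

end BorelGrowthAux


theorem growth_lemma_exponential_shift
    (T : ℝ → ℝ) (hmono : MonotoneOn T (Set.Ici 1)) (hTe : ∀ r : ℝ, 1 ≤ r → Real.exp 1 < T r)
    (htop : Filter.Tendsto T Filter.atTop Filter.atTop) (ε : ℝ) (hε : 0 < ε) :
    ∃ E : Set ℝ, E ⊆ Set.Ici 1 ∧ FiniteLogMeasure E ∧
      (∀ r : ℝ, 1 ≤ r → r ∉ E →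
        T (r * Real.exp (1 / (Real.log (T r) * (Real.log (Real.log (T r))) ^ (1 + ε)))) ≤
          Real.exp 1 * T r) ∧
      (∀ r : ℝ, 1 ≤ r → r ∉ E →
        T (r + r / ((Real.log (Real.log (T r))) ^ (1 + ε) * Real.log (T r))) ≤
          Real.exp 1 * T r) := by
  classical
  set δ : ℝ → ℝ := fun r => 1 / (Real.log (T r) * (Real.log (Real.log (T r))) ^ (1 + ε))
    with hδdef
  have hT0 : ∀ r, 1 ≤ r → 0 < T r := fun r hr => (Real.exp_pos 1).trans (hTe r hr)
  have hu1 : ∀ r, 1 ≤ r → 1 < Real.log (T r) := by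
    intro r hr
    have := Real.log_lt_log (Real.exp_pos 1) (hTe r hr)
    rwa [Real.log_exp] at this
  have hw0 : ∀ r, 1 ≤ r → 0 < Real.log (Real.log (T r)) :=
    fun r hr => Real.log_pos (hu1 r hr)
  have hwp : ∀ r, 1 ≤ r → 0 < (Real.log (Real.log (T r))) ^ (1 + ε) :=
    fun r hr => Real.rpow_pos_of_pos (hw0 r hr) _
  have hden : ∀ r, 1 ≤ r → 0 < Real.log (T r) * (Real.log (Real.log (T r))) ^ (1 + ε) :=
    fun r hr => mul_pos (lt_trans one_pos (hu1 r hr)) (hwp r hr)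
  have hδpos : ∀ r, 1 ≤ r → 0 < δ r := fun r hr => div_pos one_pos (hden r hr)
  have hδanti : ∀ r s, 1 ≤ r → r ≤ s → δ s ≤ δ r := by
    intro r s hr hrs
    have hs : 1 ≤ s := hr.trans hrs
    have h1 : Real.log (T r) ≤ Real.log (T s) :=
      Real.log_le_log (hT0 r hr) (hmono (Set.mem_Ici.mpr hr) (Set.mem_Ici.mpr hs) hrs)
    have h2 : Real.log (Real.log (T r)) ≤ Real.log (Real.log (T s)) :=
      Real.log_le_log (lt_trans one_pos (hu1 r hr)) h1
    have h3 := Real.rpow_le_rpow (hw0 r hr).le h2 (by linarith : (0:ℝ) ≤ 1 + ε)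
    exact one_div_le_one_div_of_le (hden r hr)
      (mul_le_mul h1 h3 (hwp r hr).le (by linarith [hu1 s hs]))
  set C := δ 1 with hCdef
  have hC : ∀ r, 1 ≤ r → δ r ≤ C := fun r hr => hδanti 1 r le_rfl hr
  set g : ℕ → ℝ := fun n => if n = 0 then C
    else (((n : ℝ) + 1) * Real.log ((n : ℝ) + 1) ^ (1 + ε))⁻¹ with hgdef
  have hg0 : ∀ n, 0 ≤ g n := by
    intro n
    simp only [hgdef]
    by_cases hn : n = 0
    · rw [if_pos hn]; exact (hδpos 1 le_rfl).le
    · rw [if_neg hn]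
      apply inv_nonneg.2
      refine mul_nonneg (by positivity) (Real.rpow_nonneg (Real.log_nonneg ?_) _)
      have := Nat.cast_nonneg (α := ℝ) n; linarith
  have hbert := BorelGrowthAux.summable_bertrand (p := 1 + ε) (by linarith)
  have hgsum : Summable g := by
    rw [← summable_nat_add_iff 1]
    refine ((summable_nat_add_iff 1).mpr hbert).congr fun n => ?_
    simp only [hgdef, Nat.succ_ne_zero, if_false]
  have hgbd : ∀ (n : ℕ) (r : ℝ), 1 ≤ r → ((n:ℝ) + 1) ≤ Real.log (T r) → δ r ≤ g n := by
    intro n r hr hlog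
    simp only [hgdef]
    rcases Nat.eq_zero_or_pos n with hn | hn
    · subst hn; rw [if_pos rfl]; exact hC r hr
    · rw [if_neg hn.ne']
      have hn1 : (1:ℝ) ≤ (n:ℝ) := by exact_mod_cast hn
      have hlogn : 0 < Real.log ((n:ℝ) + 1) := Real.log_pos (by linarith)
      have hw : Real.log ((n:ℝ) + 1) ≤ Real.log (Real.log (T r)) :=
        Real.log_le_log (by linarith) hlog
      have h3 := Real.rpow_le_rpow hlogn.le hw (by linarith : (0:ℝ) ≤ 1 + ε)
      simp only [hδdef, one_div]
      apply inv_anti₀ (mul_pos (by linarith) (Real.rpow_pos_of_pos hlogn _))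
      exact mul_le_mul hlog h3 (Real.rpow_nonneg hlogn.le _) (by linarith [hu1 r hr])
  have hcore := BorelGrowthAux.borel_core T δ C g hmono hTe hδpos hC hgsum hg0 hgbd
  set E := {r : ℝ | 1 ≤ r ∧ Real.exp 1 * T r < T (r * Real.exp (δ r))} with hEdef
  have hc1 : ∀ r, 1 ≤ r → r ∉ E → T (r * Real.exp (δ r)) ≤ Real.exp 1 * T r :=
    fun r hr hrE => not_lt.mp (fun h => hrE ⟨hr, h⟩)
  refine ⟨E, fun r hr => hr.1, hcore, fun r hr hrE => hc1 r hr hrE, ?_⟩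
  intro r hr hrE
  have hd0 : 0 < δ r := hδpos r hr
  have heq : r + r / ((Real.log (Real.log (T r))) ^ (1 + ε) * Real.log (T r)) =
      r * (1 + δ r) := by
    have h1 : Real.log (T r) ≠ 0 := (lt_trans one_pos (hu1 r hr)).ne'
    have h2 : (Real.log (Real.log (T r))) ^ (1 + ε) ≠ 0 := (hwp r hr).ne'
    simp only [hδdef]
    field_simp
  rw [heq]
  have hle : r * (1 + δ r) ≤ r * Real.exp (δ r) := by
    apply mul_le_mul_of_nonneg_left _ (by linarith : (0:ℝ) ≤ r)
    have := Real.add_one_le_exp (δ r)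
    linarith
  have hmem1 : (1:ℝ) ≤ r * (1 + δ r) := by nlinarith
  exact (hmono (Set.mem_Ici.mpr hmem1) (Set.mem_Ici.mpr (hmem1.trans hle)) hle).trans
    (hc1 r hr hrE)
end

section
/- Let μ be a Borel measure on ℂ that is finite on compact sets, such that N(μ,0,r) has finite order λ = limsup_{r→∞} (log⁺ N(μ,0,r))/(log r) < ∞. Then for every c ∈ ℂ and every ε > 0 with λ − 1 + ε ≠ 0 there exists a constant C > 0 such that |N(μ,c,r) − N(μ,0,r)| ≤ C·(1 + r^{λ−1+ε}) for all r ≥ 1; in particular also N(μ,0,r+|c|) ≤ N(μ,0,r) + C·(1 + r^{λ−1+ε}) for all r ≥ 1. -/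
open MeasureTheory Filter Metric

/-- `n(mu, c, t) = mu(closedBall c t)` for a Borel measure on the plane. -/
noncomputable def ballCnt (mu : MeasureTheory.Measure ℂ) (c : ℂ) (t : ℝ) : ℝ :=
  (mu (closedBall c t)).toReal

/-- `N(mu, c, r) = ∫₁^r n(mu,c,t)/t dt`. -/
noncomputable def intCnt (mu : MeasureTheory.Measure ℂ) (c : ℂ) (r : ℝ) : ℝ :=
  ∫ t in (1:ℝ)..r, ballCnt mu c t / t
section AuxCounting

open intervalIntegral Set

private lemma aux_intble {f w : ℝ → ℝ} {p q : ℝ} (hm : Monotone f)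
    (hw : ContinuousOn w (Set.uIcc p q)) :
    IntervalIntegrable (fun t => f t * w t) MeasureTheory.volume p q :=
  hm.intervalIntegrable.mul_continuousOn hw

private lemma aux_inv_cont {p q b : ℝ} (hp : 0 < p) (hb : 0 ≤ b) (hpq : p ≤ q) :
    ContinuousOn (fun t : ℝ => (t + b)⁻¹) (Set.uIcc p q) := by
  apply ContinuousOn.inv₀ (by fun_prop)
  intro x hx
  rw [Set.uIcc_of_le hpq] at hx
  have h1 := hx.1
  have : 0 < x + b := by linarith
  exact ne_of_gt this

private lemma aux_intble_div {f : ℝ → ℝ} {p q b : ℝ} (hm : Monotone f) (hp : 0 < p)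
    (hb : 0 ≤ b) (hpq : p ≤ q) :
    IntervalIntegrable (fun t => f t / (t + b)) volume p q := by
  simpa [div_eq_mul_inv] using aux_intble hm (aux_inv_cont hp hb hpq)

private lemma aux_intble_div0 {f : ℝ → ℝ} {p q : ℝ} (hm : Monotone f) (hp : 0 < p) (hpq : p ≤ q) :
    IntervalIntegrable (fun t => f t / t) volume p q := by
  simpa using aux_intble_div (b := 0) hm hp le_rfl hpq

private lemma aux_split {f : ℝ → ℝ} {p q : ℝ} (hm : Monotone f) (hp : 1 ≤ p) (hpq : p ≤ q) :
    (∫ t in (1:ℝ)..q, f t / t) =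
      (∫ t in (1:ℝ)..p, f t / t) + ∫ t in p..q, f t / t :=
  (integral_add_adjacent_intervals (aux_intble_div0 hm one_pos hp)
    (aux_intble_div0 hm (lt_of_lt_of_le one_pos hp) hpq)).symm

private lemma aux_nonneg {f : ℝ → ℝ} {p q : ℝ} (h0 : ∀ t, 0 ≤ f t) (hp : 0 < p) (hpq : p ≤ q) :
    0 ≤ ∫ t in p..q, f t / t := by
  apply intervalIntegral.integral_nonneg hpq
  intro u hu
  have hu0 : 0 < u := lt_of_lt_of_le hp hu.1
  exact div_nonneg (h0 u) hu0.le

private lemma aux_tail {f : ℝ → ℝ} {r a : ℝ} (hm : Monotone f) (h0 : ∀ t, 0 ≤ f t)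
    (hr : 1 ≤ r) (ha : 0 ≤ a) :
    (∫ t in r..(r+a), f t / t) ≤ f (r+a) * a / r := by
  have hr0 : (0:ℝ) < r := lt_of_lt_of_le one_pos hr
  have h1 : (∫ t in r..(r+a), f t / t) ≤ ∫ t in r..(r+a), f (r+a) / r := by
    apply intervalIntegral.integral_mono_on (by linarith)
      (aux_intble_div0 hm hr0 (by linarith)) intervalIntegrable_const
    intro x hx
    exact div_le_div₀ (h0 _) (hm hx.2) hr0 hx.1
  have h2 : (∫ t in r..(r+a), f (r+a) / r) = f (r+a) * a / r := by
    simp [intervalIntegral.integral_const]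
    ring
  linarith [h1, h2.le, h2.ge]

private lemma aux_ratio {q s : ℝ} (hq : q ≠ 0) (hs : 0 ≤ s) : (s - 1) / q ≤ (1 + s) / |q| := by
  rcases lt_or_gt_of_ne hq with h | h
  · rw [abs_of_neg h]
    have h1 : (s - 1) / q = (1 - s) / (-q) := by
      rw [div_neg]; ring
    rw [h1]
    gcongr
    · linarith
    · linarith
  · rw [abs_of_pos h]
    gcongr
    linarith

private lemma aux_base_pow {x b e : ℝ} (hx : 1 ≤ x) (hb : 0 ≤ b) (he : 0 ≤ e) :
    (x + b) ^ e ≤ (1 + b) ^ e * x ^ e := by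
  rw [← Real.mul_rpow (by linarith) (by linarith)]
  apply Real.rpow_le_rpow (by linarith) (by nlinarith) he

private lemma aux_tail_poly {f : ℝ → ℝ} (hm : Monotone f) (h0 : ∀ t, 0 ≤ f t) {a e C r : ℝ}
    (ha : 0 ≤ a) (he : 0 ≤ e) (hC : 0 ≤ C)
    (hpoly : ∀ s, 1 ≤ s → f s ≤ C * s ^ e) (hr : 1 ≤ r) :
    (∫ t in r..(r+a), f t / t) ≤ (C * (1 + a) ^ e * a) * r ^ (e - 1) := by
  have hr0 : (0:ℝ) < r := by linarith
  have htail := aux_tail hm h0 hr ha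
  have hfra : f (r + a) ≤ C * (1+a)^e * r ^ e := by
    calc f (r + a) ≤ C * (r+a) ^ e := hpoly _ (by linarith)
      _ ≤ C * ((1+a)^e * r ^ e) := by
          have := aux_base_pow hr ha he
          nlinarith [Real.rpow_nonneg (by linarith : (0:ℝ) ≤ r+a) e]
      _ = C * (1+a)^e * r ^ e := by ring
  have hre : r ^ e / r = r ^ (e - 1) := by
    rw [Real.rpow_sub hr0, Real.rpow_one]
  have hg : f (r+a) * a / r ≤ C * (1+a)^e * r ^ e * a / r := by gcongr
  have heq : C * (1+a)^e * r ^ e * a / r = (C * (1+a)^e * a) * r ^ (e-1) := by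
    rw [← hre]; ring
  linarith [htail, hg, heq.le, heq.ge]

private lemma aux_main {f : ℝ → ℝ} (hm : Monotone f) (h0 : ∀ t, 0 ≤ f t) {a e C : ℝ}
    (ha : 0 ≤ a) (he : 0 ≤ e) (hC : 0 ≤ C)
    (hpoly : ∀ s, 1 ≤ s → f s ≤ C * s ^ e) (hq : e - 1 ≠ 0) :
    ∃ D, 0 < D ∧ ∀ r, 1 ≤ r →
      (∫ t in (1:ℝ)..r, f (t + a) / t) ≤
        (∫ t in (1:ℝ)..r, f t / t) + D * (1 + r ^ (e - 1)) := by
  have hA1n : 0 ≤ C * (1 + a) ^ e * a := by positivity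
  have hA2n : 0 ≤ C * a * (1 + a) ^ e / |e - 1| := by positivity
  refine ⟨C * (1 + a) ^ e * a + C * a * (1 + a) ^ e / |e - 1| + 1, by positivity,
    fun r hr => ?_⟩
  have hr0 : (0:ℝ) < r := by linarith
  have hfa : Monotone (fun t => f (t + a)) := fun x y hxy => hm (by linarith)
  have hwc : ContinuousOn (fun t : ℝ => a / (t * (t + a))) (Set.uIcc 1 r) := by
    apply ContinuousOn.div continuousOn_const (by fun_prop)
    intro x hx
    rw [Set.uIcc_of_le hr] at hx
    have := hx.1
    have : 0 < x * (x + a) := by nlinarith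
    exact ne_of_gt this
  have i1 : IntervalIntegrable (fun t => f (t + a) / (t + a)) volume 1 r :=
    aux_intble_div hfa one_pos ha hr
  have i2 : IntervalIntegrable (fun t => f (t + a) * (a / (t * (t + a)))) volume 1 r :=
    aux_intble hfa hwc
  have hsplit : (∫ t in (1:ℝ)..r, f (t + a) / t) =
      (∫ t in (1:ℝ)..r, f (t + a) / (t + a)) +
      ∫ t in (1:ℝ)..r, f (t + a) * (a / (t * (t + a))) := by
    rw [← intervalIntegral.integral_add i1 i2]
    apply intervalIntegral.integral_congr
    intro x hx
    rw [Set.uIcc_of_le hr] at hx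
    have hx1 : (1:ℝ) ≤ x := hx.1
    have hx0 : (0:ℝ) < x := by linarith
    have hxa : (0:ℝ) < x + a := by linarith
    field_simp
  have hpart1 : (∫ t in (1:ℝ)..r, f (t + a) / (t + a)) ≤
      (∫ t in (1:ℝ)..r, f t / t) + C * (1 + a) ^ e * a * r ^ (e - 1) := by
    have hcomp : (∫ t in (1:ℝ)..r, f (t + a) / (t + a)) =
        ∫ t in (1+a)..(r+a), f t / t := by
      simpa using intervalIntegral.integral_comp_add_right (fun t => f t / t) a
    rw [hcomp]
    have hs1 : (∫ t in (1:ℝ)..(r+a), f t / t) =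
        (∫ t in (1:ℝ)..(1+a), f t / t) + ∫ t in (1+a)..(r+a), f t / t :=
      aux_split hm (by linarith) (by linarith)
    have hs2 : (∫ t in (1:ℝ)..(r+a), f t / t) =
        (∫ t in (1:ℝ)..r, f t / t) + ∫ t in r..(r+a), f t / t :=
      aux_split hm hr (by linarith)
    have hn1 : 0 ≤ ∫ t in (1:ℝ)..(1+a), f t / t := aux_nonneg h0 one_pos (by linarith)
    have htail := aux_tail_poly hm h0 ha he hC hpoly hr
    linarith [hs1, hs2, hn1, htail]
  have hpow2 : ∀ x : ℝ, 1 ≤ x → f (x + a) * (a / (x * (x + a))) ≤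
      (C * a * (1+a)^e) * x ^ (e - 2) := by
    intro x hx
    have hx0 : (0:ℝ) < x := by linarith
    have hxa : (0:ℝ) < x + a := by linarith
    have hfb : f (x + a) ≤ C * (1+a)^e * x ^ e := by
      calc f (x + a) ≤ C * (x+a) ^ e := hpoly _ (by linarith)
        _ ≤ C * ((1+a)^e * x ^ e) := by
            have := aux_base_pow hx ha he
            nlinarith [Real.rpow_nonneg hxa.le e]
        _ = C * (1+a)^e * x ^ e := by ring
    have hxe : x ^ (e - 2) * x * x = x ^ e := by
      rw [← Real.rpow_add_one hx0.ne' (e-2), ← Real.rpow_add_one hx0.ne' (e-2+1)]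
      congr 1; ring
    have hw1 : a / (x * (x + a)) ≤ a / (x * x) := by
      apply div_le_div_of_nonneg_left ha (by nlinarith) (by nlinarith)
    have key : C * (1+a)^e * x ^ e * (a / (x * x)) = (C * a * (1+a)^e) * x ^ (e-2) := by
      rw [← hxe]
      field_simp
    calc f (x + a) * (a / (x * (x + a)))
        ≤ (C * (1+a)^e * x ^ e) * (a / (x * x)) := by
          apply mul_le_mul hfb hw1 (div_nonneg ha (mul_nonneg hx0.le hxa.le))
          exact mul_nonneg (mul_nonneg hC (Real.rpow_nonneg (by linarith) e))
            (Real.rpow_nonneg hx0.le e)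
      _ = (C * a * (1+a)^e) * x ^ (e-2) := key
  have hint2 : (∫ t in (1:ℝ)..r, f (t + a) * (a / (t * (t + a)))) ≤
      (C * a * (1+a)^e) * ((r ^ (e-1) - 1) / (e-1)) := by
    have hcont : IntervalIntegrable (fun t : ℝ => (C * a * (1+a)^e) * t ^ (e-2)) volume 1 r := by
      apply ContinuousOn.intervalIntegrable
      apply ContinuousOn.mul continuousOn_const
      apply ContinuousOn.rpow_const continuousOn_id
      intro x hx
      rw [Set.uIcc_of_le hr] at hx
      refine Or.inl ?_
      simp only [id_eq]
      intro h
      rw [h] at hx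
      exact absurd hx.1 (by norm_num)
    have hm1 : (∫ t in (1:ℝ)..r, f (t + a) * (a / (t * (t + a)))) ≤
        ∫ t in (1:ℝ)..r, (C * a * (1+a)^e) * t ^ (e-2) := by
      apply intervalIntegral.integral_mono_on hr i2 hcont
      intro x hx
      exact hpow2 x hx.1
    have hval : (∫ t in (1:ℝ)..r, (C * a * (1+a)^e) * t ^ (e-2)) =
        (C * a * (1+a)^e) * ((r ^ (e-1) - 1) / (e-1)) := by
      rw [intervalIntegral.integral_const_mul]
      congr 1
      rw [integral_rpow]
      · have h21 : e - 2 + 1 = e - 1 := by ring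
        rw [h21, Real.one_rpow]
      · right
        constructor
        · intro h; apply hq; linarith [h]
        · intro h; rw [Set.uIcc_of_le hr] at h; linarith [h.1]
    linarith [hm1, hval.le, hval.ge]
  have hratio : (r ^ (e-1) - 1) / (e-1) ≤ (1 + r ^ (e-1)) / |e-1| :=
    aux_ratio hq (Real.rpow_nonneg hr0.le _)
  have hX : (0:ℝ) ≤ r ^ (e-1) := Real.rpow_nonneg hr0.le _
  have h2 : (∫ t in (1:ℝ)..r, f (t + a) * (a / (t * (t + a)))) ≤ (C * a * (1 + a) ^ e / |e - 1|) * (1 + r ^ (e-1)) := by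
    have hc : (0:ℝ) ≤ C * a * (1+a)^e := by positivity
    have := mul_le_mul_of_nonneg_left hratio hc
    calc (∫ t in (1:ℝ)..r, f (t + a) * (a / (t * (t + a))))
        ≤ (C * a * (1+a)^e) * ((r ^ (e-1) - 1) / (e-1)) := hint2
      _ ≤ (C * a * (1+a)^e) * ((1 + r ^ (e-1)) / |e-1|) := this
      _ = C * a * (1+a)^e / |e-1| * (1 + r ^ (e-1)) := by ring
  calc (∫ t in (1:ℝ)..r, f (t + a) / t)
      = (∫ t in (1:ℝ)..r, f (t + a) / (t + a)) +
        ∫ t in (1:ℝ)..r, f (t + a) * (a / (t * (t + a))) := hsplit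
    _ ≤ ((∫ t in (1:ℝ)..r, f t / t) + C * (1 + a) ^ e * a * r ^ (e-1)) +
        (C * a * (1 + a) ^ e / |e - 1|) * (1 + r ^ (e-1)) := by
        linarith [hpart1, h2]
    _ ≤ (∫ t in (1:ℝ)..r, f t / t) +
        (C * (1 + a) ^ e * a + C * a * (1 + a) ^ e / |e - 1| + 1) * (1 + r ^ (e-1)) := by
        nlinarith

end AuxCounting
section MainProof

private lemma aux_intCnt_def (μ : MeasureTheory.Measure ℂ) (c : ℂ) (r : ℝ) :
    intCnt μ c r = ∫ t in (1:ℝ)..r, ballCnt μ c t / t := rfl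

private lemma aux_ballCnt_mono (μ : MeasureTheory.Measure ℂ)
    [MeasureTheory.IsFiniteMeasureOnCompacts μ] (c : ℂ) : Monotone (ballCnt μ c) := by
  intro s t hst
  exact ENNReal.toReal_mono (isCompact_closedBall c t).measure_lt_top.ne
    (measure_mono (closedBall_subset_closedBall hst))

private lemma aux_ballCnt_nonneg (μ : MeasureTheory.Measure ℂ) (c : ℂ) (t : ℝ) :
    0 ≤ ballCnt μ c t := ENNReal.toReal_nonneg

private lemma aux_ballCnt_shift (μ : MeasureTheory.Measure ℂ)
    [MeasureTheory.IsFiniteMeasureOnCompacts μ] (c c' : ℂ) (t : ℝ) :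
    ballCnt μ c t ≤ ballCnt μ c' (t + ‖c - c'‖) := by
  apply ENNReal.toReal_mono (isCompact_closedBall c' _).measure_lt_top.ne
  apply measure_mono
  apply closedBall_subset_closedBall'
  rw [Complex.dist_eq]


theorem counting_function_finite_order_shift
    (μ : MeasureTheory.Measure ℂ) [MeasureTheory.IsFiniteMeasureOnCompacts μ] (lam : ℝ)
    (hbdd : Filter.IsBoundedUnder (· ≤ ·) Filter.atTop
      (fun r => logPlus (intCnt μ 0 r) / Real.log r))
    (hlam : Filter.limsup (fun r => logPlus (intCnt μ 0 r) / Real.log r) Filter.atTop = lam) :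
    ∀ c : ℂ, ∀ ε : ℝ, 0 < ε → lam - 1 + ε ≠ 0 →
      ∃ C : ℝ, 0 < C ∧ ∀ r : ℝ, 1 ≤ r →
        |intCnt μ c r - intCnt μ 0 r| ≤ C * (1 + r ^ (lam - 1 + ε)) ∧
        intCnt μ 0 (r + ‖c‖) ≤ intCnt μ 0 r + C * (1 + r ^ (lam - 1 + ε)) := by
  intro c ε hε hne
  set a : ℝ := ‖c‖ with haDef
  have ha : 0 ≤ a := norm_nonneg c
  have hgm : Monotone (ballCnt μ 0) := aux_ballCnt_mono μ 0
  have hgcm : Monotone (ballCnt μ c) := aux_ballCnt_mono μ c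
  have hg0 : ∀ t, 0 ≤ ballCnt μ 0 t := aux_ballCnt_nonneg μ 0
  have hgc0 : ∀ t, 0 ≤ ballCnt μ c t := aux_ballCnt_nonneg μ c
  have habs1 : ‖(0:ℂ) - c‖ = a := by simp [haDef]
  have habs2 : ‖c - 0‖ = a := by simp [haDef]
  have hshift1 : ∀ t, ballCnt μ 0 t ≤ ballCnt μ c (t + a) := by
    intro t
    have := aux_ballCnt_shift μ 0 c t
    rwa [habs1] at this
  have hshift2 : ∀ t, ballCnt μ c t ≤ ballCnt μ 0 (t + a) := by
    intro t
    have := aux_ballCnt_shift μ c 0 t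
    rwa [habs2] at this
  -- lam ≥ 0
  have hlam0 : 0 ≤ lam := by
    rw [← hlam]
    apply Filter.le_limsup_of_frequently_le _ hbdd
    apply Filter.Eventually.frequently
    filter_upwards [Filter.eventually_ge_atTop (2:ℝ)] with r hr
    have hlr : 0 < Real.log r := Real.log_pos (by linarith)
    exact div_nonneg (le_max_left _ _) hlr.le
  -- choose δ
  obtain ⟨δ, hδ0, hδε, hδne⟩ : ∃ δ : ℝ, 0 < δ ∧ δ ≤ ε ∧ lam + δ - 1 ≠ 0 := by
    by_cases h : lam + ε/2 - 1 = 0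
    · refine ⟨ε/4, by linarith, by linarith, ?_⟩
      intro h4
      linarith
    · exact ⟨ε/2, by linarith, by linarith, h⟩
  set e : ℝ := lam + δ with heDef
  have he0 : (0:ℝ) ≤ e := by rw [heDef]; linarith
  have heq : e - 1 ≠ 0 := by
    rw [heDef]
    intro h; exact hδne (by linarith)
  -- eventually polynomial bound on F
  have hev : ∀ᶠ r in Filter.atTop,
      logPlus (intCnt μ 0 r) / Real.log r < lam + δ := by
    apply Filter.eventually_lt_of_limsup_lt _ hbdd
    rw [hlam]; linarith
  obtain ⟨R₀, hR₀⟩ := Filter.eventually_atTop.mp hev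
  set R : ℝ := max R₀ 2 with hRDef
  have hR2 : (2:ℝ) ≤ R := le_max_right _ _
  have hR1 : (1:ℝ) ≤ R := by linarith
  have hFr : ∀ r, R ≤ r → intCnt μ 0 r ≤ r ^ e := by
    intro r hr
    have hr2 : (2:ℝ) ≤ r := le_trans hR2 hr
    have hr1 : (1:ℝ) < r := by linarith
    have hlr : 0 < Real.log r := Real.log_pos hr1
    have h1 : logPlus (intCnt μ 0 r) / Real.log r < e := hR₀ r (le_trans (le_max_left _ _) hr)
    have h2 : logPlus (intCnt μ 0 r) < e * Real.log r := by
      rwa [div_lt_iff₀ hlr] at h1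
    have h3 : Real.log (intCnt μ 0 r) ≤ logPlus (intCnt μ 0 r) := le_max_right _ _
    rcases le_or_gt (intCnt μ 0 r) 0 with hF | hF
    · exact le_trans hF (Real.rpow_nonneg (by linarith) e)
    · have hexp : intCnt μ 0 r = Real.exp (Real.log (intCnt μ 0 r)) := (Real.exp_log hF).symm
      rw [hexp, Real.rpow_def_of_pos (by linarith : (0:ℝ) < r)]
      apply Real.exp_le_exp.mpr
      calc Real.log (intCnt μ 0 r) ≤ logPlus (intCnt μ 0 r) := h3
        _ ≤ e * Real.log r := h2.le
        _ = Real.log r * e := mul_comm _ _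
  -- monotonicity of intCnt in r
  have hFmono : ∀ p q : ℝ, 1 ≤ p → p ≤ q → intCnt μ 0 p ≤ intCnt μ 0 q := by
    intro p q hp hpq
    rw [aux_intCnt_def, aux_intCnt_def]
    have hs := aux_split hgm hp hpq
    have hn := aux_nonneg hg0 (lt_of_lt_of_le one_pos hp) hpq
    linarith
  set C₀ : ℝ := max 1 (intCnt μ 0 R) with hC₀Def
  have hC₀1 : (1:ℝ) ≤ C₀ := le_max_left _ _
  have hC₀0 : (0:ℝ) ≤ C₀ := by linarith
  have hFpoly : ∀ r, 1 ≤ r → intCnt μ 0 r ≤ C₀ * r ^ e := by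
    intro r hr
    have hre1 : (1:ℝ) ≤ r ^ e := Real.one_le_rpow hr he0
    rcases le_or_gt R r with h | h
    · calc intCnt μ 0 r ≤ r ^ e := hFr r h
        _ ≤ C₀ * r ^ e := le_mul_of_one_le_left (by linarith) hC₀1
    · calc intCnt μ 0 r ≤ intCnt μ 0 R := hFmono r R hr h.le
        _ ≤ C₀ := le_max_right _ _
        _ ≤ C₀ * r ^ e := le_mul_of_one_le_right hC₀0 hre1
  -- polynomial bound on ballCnt μ 0
  have hlog2 : (0:ℝ) < Real.log 2 := Real.log_pos one_lt_two
  set C₁ : ℝ := C₀ * 2 ^ e / Real.log 2 with hC₁Def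
  have hC₁0 : 0 ≤ C₁ := by
    apply div_nonneg _ hlog2.le
    exact mul_nonneg hC₀0 (Real.rpow_nonneg (by norm_num) e)
  have hgpoly : ∀ r, 1 ≤ r → ballCnt μ 0 r ≤ C₁ * r ^ e := by
    intro r hr
    have hr0 : (0:ℝ) < r := by linarith
    have hval : (∫ t in r..(2*r), ballCnt μ 0 r * t⁻¹) = ballCnt μ 0 r * Real.log 2 := by
      rw [intervalIntegral.integral_const_mul, integral_inv]
      · congr 1
        have h2r : (2*r)/r = 2 := by field_simp
        rw [h2r]
      · intro hmem
        rw [Set.uIcc_of_le (by linarith)] at hmem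
        linarith [hmem.1]
    have hlb : (∫ t in r..(2*r), ballCnt μ 0 r * t⁻¹) ≤
        ∫ t in r..(2*r), ballCnt μ 0 t / t := by
      apply intervalIntegral.integral_mono_on (by linarith)
      · apply ContinuousOn.intervalIntegrable
        apply ContinuousOn.mul continuousOn_const
        apply ContinuousOn.inv₀ continuousOn_id
        intro x hx
        rw [Set.uIcc_of_le (by linarith)] at hx
        simp only [id_eq]
        intro h0x
        rw [h0x] at hx
        linarith [hx.1]
      · exact aux_intble_div0 hgm hr0 (by linarith)
      · intro x hx
        rw [div_eq_mul_inv, mul_comm (ballCnt μ 0 x), mul_comm (ballCnt μ 0 r)]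
        apply mul_le_mul_of_nonneg_left (hgm hx.1)
        exact inv_nonneg.mpr (by linarith [hx.1])
    have hsF : intCnt μ 0 (2*r) = intCnt μ 0 r + ∫ t in r..(2*r), ballCnt μ 0 t / t := by
      rw [aux_intCnt_def, aux_intCnt_def]
      exact aux_split hgm hr (by linarith : r ≤ 2*r)
    have hFn : 0 ≤ intCnt μ 0 r := by
      rw [aux_intCnt_def]
      exact aux_nonneg hg0 one_pos hr
    have hF2r : intCnt μ 0 (2*r) ≤ C₀ * (2*r) ^ e := hFpoly (2*r) (by linarith)
    have h2re : (2*r) ^ e = 2 ^ e * r ^ e := Real.mul_rpow (by norm_num) hr0.le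
    have hkey : ballCnt μ 0 r * Real.log 2 ≤ C₀ * 2 ^ e * r ^ e := by
      calc ballCnt μ 0 r * Real.log 2 = ∫ t in r..(2*r), ballCnt μ 0 r * t⁻¹ := hval.symm
        _ ≤ ∫ t in r..(2*r), ballCnt μ 0 t / t := hlb
        _ ≤ intCnt μ 0 (2*r) := by linarith [hsF, hFn]
        _ ≤ C₀ * (2*r) ^ e := hF2r
        _ = C₀ * 2 ^ e * r ^ e := by rw [h2re]; ring
    rw [hC₁Def, div_mul_eq_mul_div, le_div_iff₀ hlog2]
    linarith
  -- polynomial bound on ballCnt μ c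
  have hC₂0 : 0 ≤ C₁ * (1 + a) ^ e := mul_nonneg hC₁0 (Real.rpow_nonneg (by linarith) e)
  have hgcpoly : ∀ s, 1 ≤ s → ballCnt μ c s ≤ (C₁ * (1 + a) ^ e) * s ^ e := by
    intro s hs
    calc ballCnt μ c s ≤ ballCnt μ 0 (s + a) := hshift2 s
      _ ≤ C₁ * (s + a) ^ e := hgpoly (s+a) (by linarith)
      _ ≤ C₁ * ((1+a)^e * s ^ e) := by
          have := aux_base_pow hs ha he0
          nlinarith [Real.rpow_nonneg (by linarith : (0:ℝ) ≤ s + a) e]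
      _ = (C₁ * (1 + a) ^ e) * s ^ e := by ring
  -- main bounds
  obtain ⟨D₁, hD₁0, hD₁⟩ := aux_main hgm hg0 ha he0 hC₁0 hgpoly heq
  obtain ⟨D₂, hD₂0, hD₂⟩ := aux_main hgcm hgc0 ha he0 hC₂0 hgcpoly heq
  have hC₃0 : 0 ≤ C₁ * (1 + a) ^ e * a := mul_nonneg hC₂0 ha
  refine ⟨D₁ + D₂ + C₁ * (1 + a) ^ e * a + 1, by positivity, fun r hr => ?_⟩
  have hr0 : (0:ℝ) < r := by linarith
  have hXY : r ^ (e - 1) ≤ r ^ (lam - 1 + ε) := by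
    apply Real.rpow_le_rpow_of_exponent_le hr
    rw [heDef]; linarith
  have hX0 : (0:ℝ) ≤ r ^ (e - 1) := Real.rpow_nonneg hr0.le _
  have hY0 : (0:ℝ) ≤ r ^ (lam - 1 + ε) := Real.rpow_nonneg hr0.le _
  -- upper bound
  have hupper : intCnt μ c r - intCnt μ 0 r ≤ D₁ * (1 + r ^ (e-1)) := by
    have hle1 : intCnt μ c r ≤ ∫ t in (1:ℝ)..r, ballCnt μ 0 (t + a) / t := by
      rw [aux_intCnt_def]
      apply intervalIntegral.integral_mono_on hr (aux_intble_div0 hgcm one_pos hr)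
        (aux_intble_div0 (fun x y hxy => hgm (by linarith : x + a ≤ y + a)) one_pos hr)
      intro x hx
      have hx0 : (0:ℝ) < x := by linarith [hx.1]
      rw [div_eq_mul_inv, div_eq_mul_inv]
      exact mul_le_mul_of_nonneg_right (hshift2 x) (inv_nonneg.mpr hx0.le)
    have hle2 := hD₁ r hr
    rw [aux_intCnt_def μ 0 r]
    linarith
  -- lower bound
  have hlower : intCnt μ 0 r - intCnt μ c r ≤ D₂ * (1 + r ^ (e-1)) := by
    have hle1 : intCnt μ 0 r ≤ ∫ t in (1:ℝ)..r, ballCnt μ c (t + a) / t := by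
      rw [aux_intCnt_def]
      apply intervalIntegral.integral_mono_on hr (aux_intble_div0 hgm one_pos hr)
        (aux_intble_div0 (fun x y hxy => hgcm (by linarith : x + a ≤ y + a)) one_pos hr)
      intro x hx
      have hx0 : (0:ℝ) < x := by linarith [hx.1]
      rw [div_eq_mul_inv, div_eq_mul_inv]
      exact mul_le_mul_of_nonneg_right (hshift1 x) (inv_nonneg.mpr hx0.le)
    have hle2 := hD₂ r hr
    rw [aux_intCnt_def μ c r]
    linarith
  -- tail bound for second conclusion
  have htail : intCnt μ 0 (r + a) ≤ intCnt μ 0 r + (C₁ * (1 + a) ^ e * a) * r ^ (e-1) := by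
    have hs := aux_split hgm hr (by linarith : r ≤ r + a)
    have ht := aux_tail_poly hgm hg0 ha he0 hC₁0 hgpoly hr
    rw [aux_intCnt_def μ 0 (r+a), aux_intCnt_def μ 0 r]
    linarith
  -- finish
  have h1Y : (0:ℝ) ≤ 1 + r ^ (lam - 1 + ε) := by linarith
  have hm1 : D₁ * (1 + r ^ (e-1)) ≤ D₁ * (1 + r ^ (lam - 1 + ε)) :=
    mul_le_mul_of_nonneg_left (by linarith) hD₁0.le
  have hm2 : D₂ * (1 + r ^ (e-1)) ≤ D₂ * (1 + r ^ (lam - 1 + ε)) :=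
    mul_le_mul_of_nonneg_left (by linarith) hD₂0.le
  have hm3 : (C₁ * (1 + a) ^ e * a) * r ^ (e-1) ≤
      (C₁ * (1 + a) ^ e * a) * (1 + r ^ (lam - 1 + ε)) :=
    mul_le_mul_of_nonneg_left (by linarith) hC₃0
  have hm4 : 0 ≤ D₁ * (1 + r ^ (lam - 1 + ε)) := mul_nonneg hD₁0.le h1Y
  have hm5 : 0 ≤ D₂ * (1 + r ^ (lam - 1 + ε)) := mul_nonneg hD₂0.le h1Y
  have hm6 : 0 ≤ (C₁ * (1 + a) ^ e * a) * (1 + r ^ (lam - 1 + ε)) := mul_nonneg hC₃0 h1Y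
  have hsum : (D₁ + D₂ + C₁ * (1 + a) ^ e * a + 1) * (1 + r ^ (lam - 1 + ε)) =
      D₁ * (1 + r ^ (lam - 1 + ε)) + D₂ * (1 + r ^ (lam - 1 + ε)) +
      (C₁ * (1 + a) ^ e * a) * (1 + r ^ (lam - 1 + ε)) + (1 + r ^ (lam - 1 + ε)) := by ring
  constructor
  · rw [abs_sub_le_iff]
    constructor
    · linarith
    · linarith
  · linarith

end MainProof
end

section
/- Let f be a meromorphic function on ℂ, let c₁, …, c_n be non-zero complex numbers, let I ⊆ ℕ^{n+1} be a finite non-empty index set with meromorphic coefficients a_λ for λ ∈ I, and set P(z,f⃗) = Σ_{λ∈I} a_λ(z)·f(z)^{λ₀}·f(z+c₁)^{λ₁}⋯f(z+c_n)^{λ_n}, with total degree deg(P) = max_{λ∈I} |λ| where |λ| = λ₀ + λ₁ + ⋯ + λ_n. Then for every r > 0: m(r, P(·,f⃗)) ≤ deg(P)·m(r,f) + (Σ_{λ∈I} |λ|)·Σ_{j=1}^n m(r, f_{c_j}/f) + Σ_{λ∈I} m(r, a_λ) + deg(P)·log(2·|I|), where |I| is the number of elements of I. -/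
open MeasureTheory Filter Metric

-- auxiliary lemmas

lemma logPlus_nonneg (x : ℝ) : 0 ≤ logPlus x := le_max_left _ _

lemma logPlus_mono {x y : ℝ} (hx : 0 ≤ x) (h : x ≤ y) : logPlus x ≤ logPlus y := by
  unfold logPlus
  rcases le_total x 1 with h1 | h1
  · rw [max_eq_left (Real.log_nonpos hx h1)]; exact le_max_left _ _
  · exact max_le_max le_rfl (Real.log_le_log (lt_of_lt_of_le one_pos h1) h)

lemma logPlus_mul_le {x y : ℝ} (hx : 0 ≤ x) (hy : 0 ≤ y) :
    logPlus (x * y) ≤ logPlus x + logPlus y := by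
  rcases eq_or_lt_of_le hx with rfl | hx
  · simp [logPlus]
  rcases eq_or_lt_of_le hy with rfl | hy
  · simp [logPlus]
  unfold logPlus
  rw [Real.log_mul hx.ne' hy.ne']
  exact max_le (add_nonneg (le_max_left _ _) (le_max_left _ _))
    (add_le_add (le_max_right _ _) (le_max_right _ _))

lemma logPlus_pow (x : ℝ) (k : ℕ) : logPlus (x ^ k) = k * logPlus x := by
  unfold logPlus
  rw [Real.log_pow]
  rcases le_total (Real.log x) 0 with h | h
  · rw [max_eq_left h, max_eq_left (mul_nonpos_of_nonneg_of_nonpos (Nat.cast_nonneg k) h),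
      mul_zero]
  · rw [max_eq_right h, max_eq_right (mul_nonneg (Nat.cast_nonneg k) h)]

lemma logPlus_eq (x : ℝ) : logPlus x = Real.log (max 1 |x|) := by
  unfold logPlus
  rw [← Real.log_abs]
  rcases le_total |x| 1 with h | h
  · rw [max_eq_left (Real.log_nonpos (abs_nonneg x) h), max_eq_left h, Real.log_one]
  · rw [max_eq_right (Real.log_nonneg h), max_eq_right h]

lemma continuous_logPlus : Continuous logPlus := by
  have : logPlus = fun x => Real.log (max 1 |x|) := funext logPlus_eq
  rw [this]
  rw [continuous_iff_continuousAt]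
  intro x
  exact (Real.continuousAt_log (by positivity)).comp
    ((continuous_const.max continuous_abs).continuousAt)

lemma logPlus_prod_le {ι : Type*} (s : Finset ι) (x : ι → ℝ) (hx : ∀ i ∈ s, 0 ≤ x i) :
    logPlus (∏ i ∈ s, x i) ≤ ∑ i ∈ s, logPlus (x i) := by
  classical
  induction s using Finset.cons_induction with
  | empty => simp [logPlus]
  | cons i s hi ih =>
    rw [Finset.prod_cons, Finset.sum_cons]
    refine le_trans (logPlus_mul_le (hx i (Finset.mem_cons_self i s))
      (Finset.prod_nonneg fun j hj => hx j (Finset.mem_cons_of_mem hj))) ?_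
    exact add_le_add le_rfl (ih fun j hj => hx j (Finset.mem_cons_of_mem hj))

lemma logPlus_sum_le {ι : Type*} (s : Finset ι) (x : ι → ℝ) (hs : s.Nonempty)
    (hx : ∀ i ∈ s, 0 ≤ x i) :
    ∃ i₀ ∈ s, logPlus (∑ i ∈ s, x i) ≤ Real.log s.card + logPlus (x i₀) := by
  obtain ⟨i₀, hi₀, hmax⟩ := Finset.exists_max_image s x hs
  refine ⟨i₀, hi₀, ?_⟩
  have h1 : ∑ i ∈ s, x i ≤ s.card * x i₀ := by
    simpa [nsmul_eq_mul] using Finset.sum_le_card_nsmul s x (x i₀) fun i hi => hmax i hi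
  have h2 : logPlus (∑ i ∈ s, x i) ≤ logPlus ((s.card : ℝ) * x i₀) :=
    logPlus_mono (Finset.sum_nonneg hx) h1
  have h3 : logPlus ((s.card : ℝ) * x i₀) ≤ logPlus (s.card : ℝ) + logPlus (x i₀) :=
    logPlus_mul_le (Nat.cast_nonneg _) (hx i₀ hi₀)
  have h4 : logPlus (s.card : ℝ) = Real.log s.card := by
    unfold logPlus
    exact max_eq_right (Real.log_nonneg (by exact_mod_cast hs.card_pos))
  linarith


lemma integrable_logPlus_inv : Integrable (fun t : ℝ => logPlus (t⁻¹)) volume := by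
  have key : ∀ a b : ℝ, -1 ≤ a → b ≤ 1 → a < b → (∀ x ∈ Set.Ioo a b, x ≠ 0) →
      IntegrableOn (fun t : ℝ => -Real.log t) (Set.Ioc a b) volume := by
    intro a b ha hb hab hne
    refine intervalIntegral.integrableOn_deriv_of_nonneg
      (g := fun x => x - x * Real.log x) ?_ ?_ ?_
    · exact (continuous_id.sub Real.continuous_mul_log).continuousOn
    · intro x hx
      have : HasDerivAt (fun y => y - y * Real.log y) _ x :=
        (hasDerivAt_id x).sub (Real.hasDerivAt_mul_log (hne x hx))
      convert this using 1
      ring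
    · intro x hx
      have hx1 : |x| ≤ 1 := by
        rw [abs_le]; constructor <;> nlinarith [hx.1, hx.2]
      have : Real.log x ≤ 0 := by
        rw [← Real.log_abs]
        exact Real.log_nonpos (abs_nonneg x) hx1
      linarith
  have h1 : IntegrableOn (fun t : ℝ => logPlus (t⁻¹)) (Set.Ioc 0 1) volume := by
    refine ((key 0 1 (by norm_num) le_rfl one_pos fun x hx => hx.1.ne').congr_fun ?_
      measurableSet_Ioc)
    intro t ht
    have hlog : Real.log t ≤ 0 := Real.log_nonpos ht.1.le ht.2
    simp only [logPlus, Real.log_inv]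
    rw [max_eq_right (by linarith)]
  have h2 : IntegrableOn (fun t : ℝ => logPlus (t⁻¹)) (Set.Ioc (-1) 0) volume := by
    refine ((key (-1) 0 le_rfl zero_le_one (by norm_num) fun x hx => hx.2.ne).congr_fun ?_
      measurableSet_Ioc)
    intro t ht
    rcases eq_or_lt_of_le ht.2 with rfl | ht2
    · simp [logPlus]
    have hlog : Real.log t ≤ 0 := by
      rw [← Real.log_abs]
      refine Real.log_nonpos (abs_nonneg t) ?_
      rw [abs_le]; constructor <;> linarith [ht.1]
    simp only [logPlus, Real.log_inv]
    rw [max_eq_right (by linarith)]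
  have h3 : IntegrableOn (fun t : ℝ => logPlus (t⁻¹)) (Set.Ioc (-1) 1) volume := by
    have := h2.union h1
    rwa [Set.Ioc_union_Ioc_eq_Ioc (by norm_num) (by norm_num)] at this
  have h4 : (fun t : ℝ => logPlus (t⁻¹)) =
      Set.indicator (Set.Ioc (-1) 1) (fun t : ℝ => logPlus (t⁻¹)) := by
    funext t
    rw [eq_comm, Set.indicator_apply_eq_self]
    intro ht
    have h1t : 1 ≤ |t| := by
      simp only [Set.mem_Ioc, not_and_or, not_lt, not_le] at ht
      rcases ht with h | h
      · rw [abs_of_nonpos (by linarith)]; linarith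
      · rw [abs_of_pos (by linarith)]; linarith
    have : Real.log (t⁻¹) ≤ 0 := by
      rw [Real.log_inv, ← Real.log_abs, neg_nonpos]
      exact Real.log_nonneg h1t
    unfold logPlus
    exact max_eq_left this
  rw [h4]
  rwa [integrable_indicator_iff measurableSet_Ioc]

lemma integrable_logPlus_inv_shift (θ₀ : ℝ) :
    Integrable (fun t : ℝ => logPlus ((t - θ₀)⁻¹)) volume :=
  integrable_logPlus_inv.comp_sub_right θ₀


lemma circle_lower (r θ θ₀ : ℝ) (hr : 0 < r) (h : |θ - θ₀| ≤ Real.pi / 2) :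
    2 / Real.pi * r * |θ - θ₀| ≤
      ‖(r : ℂ) * Complex.exp (θ * Complex.I) - (r : ℂ) * Complex.exp (θ₀ * Complex.I)‖ := by
  have factor : (r : ℂ) * Complex.exp (θ * Complex.I) - (r : ℂ) * Complex.exp (θ₀ * Complex.I)
      = (r : ℂ) * Complex.exp (θ₀ * Complex.I) *
        (Complex.exp ((↑(θ - θ₀) : ℂ) * Complex.I) - 1) := by
    rw [mul_sub, mul_one, mul_assoc, ← Complex.exp_add]
    push_cast
    ring_nf
  rw [factor, norm_mul, norm_mul]
  have h1 : ‖Complex.exp ((θ₀ : ℂ) * Complex.I)‖ = 1 := by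
    rw [Complex.norm_exp]
    simp
  have h2 : |Real.sin (θ - θ₀)| ≤ ‖Complex.exp ((↑(θ - θ₀) : ℂ) * Complex.I) - 1‖ := by
    have := Complex.abs_im_le_norm (Complex.exp ((↑(θ - θ₀) : ℂ) * Complex.I) - 1)
    rwa [Complex.sub_im, Complex.exp_ofReal_mul_I_im, Complex.one_im, sub_zero] at this
  have h3 := Real.mul_abs_le_abs_sin h
  have hnr : ‖(r:ℂ)‖ = r := by
    rw [Complex.norm_real, Real.norm_eq_abs, abs_of_pos hr]
  rw [hnr, h1, mul_one]
  calc 2 / Real.pi * r * |θ - θ₀| = r * (2 / Real.pi * |θ - θ₀|) := by ring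
  _ ≤ r * |Real.sin (θ - θ₀)| := by
      exact mul_le_mul_of_nonneg_left (h3.trans le_rfl) hr.le
  _ ≤ r * ‖Complex.exp ((↑(θ - θ₀) : ℂ) * Complex.I) - 1‖ :=
      mul_le_mul_of_nonneg_left h2 hr.le


lemma MeromorphicAt.translate {f : ℂ → ℂ} {x c : ℂ} (h : MeromorphicAt f (x + c)) :
    MeromorphicAt (fun z => f (z + c)) x := by
  obtain ⟨m, hm⟩ := h
  refine ⟨m, ?_⟩
  have key : (fun z => (z - x) ^ m • f (z + c)) =
      (fun w => (w - (x + c)) ^ m • f w) ∘ (fun z => z + c) := by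
    funext z
    simp only [Function.comp_apply, add_sub_add_right_eq_sub]
  rw [key]
  have h2 : AnalyticAt ℂ (fun z : ℂ => z + c) x := by
    exact analyticAt_id.add analyticAt_const
  exact AnalyticAt.comp (f := fun z : ℂ => z + c) hm h2

lemma meromorphicAt_sum {ι : Type*} (s : Finset ι) (F : ι → ℂ → ℂ) (x : ℂ)
    (h : ∀ i ∈ s, MeromorphicAt (F i) x) :
    MeromorphicAt (fun z => ∑ i ∈ s, F i z) x := by
  classical
  induction s using Finset.cons_induction with
  | empty => simpa using MeromorphicAt.const (0 : ℂ) x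
  | cons i s hi ih =>
    have := (h i (Finset.mem_cons_self i s)).add
      (ih fun j hj => h j (Finset.mem_cons_of_mem hj))
    have e : (fun z => ∑ j ∈ Finset.cons i s hi, F j z) =
        (F i + fun z => ∑ j ∈ s, F j z) := by
      funext z; simp only [Finset.sum_cons, Pi.add_apply]
    rw [e]; exact this

lemma meromorphicAt_prod {ι : Type*} (s : Finset ι) (F : ι → ℂ → ℂ) (x : ℂ)
    (h : ∀ i ∈ s, MeromorphicAt (F i) x) :
    MeromorphicAt (fun z => ∏ i ∈ s, F i z) x := by
  classical
  induction s using Finset.cons_induction with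
  | empty => simpa using MeromorphicAt.const (1 : ℂ) x
  | cons i s hi ih =>
    have := (h i (Finset.mem_cons_self i s)).mul
      (ih fun j hj => h j (Finset.mem_cons_of_mem hj))
    have e : (fun z => ∏ j ∈ Finset.cons i s hi, F j z) =
        (F i * fun z => ∏ j ∈ s, F j z) := by
      funext z; simp only [Finset.prod_cons, Pi.mul_apply]
    rw [e]; exact this

lemma meromorphicAt_pow {f : ℂ → ℂ} {x : ℂ} (h : MeromorphicAt f x) (k : ℕ) :
    MeromorphicAt (fun z => f z ^ k) x := h.pow k

lemma MeromorphicAt.zero_or_ne {f : ℂ → ℂ} {x : ℂ} (h : MeromorphicAt f x) :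
    (∀ᶠ w in nhdsWithin x {x}ᶜ, f w = 0) ∨ (∀ᶠ w in nhdsWithin x {x}ᶜ, f w ≠ 0) := by
  rcases eq_or_ne (meromorphicOrderAt f x) ⊤ with ho | ho
  · exact Or.inl (meromorphicOrderAt_eq_top_iff.mp ho)
  · obtain ⟨m, hm⟩ := WithTop.ne_top_iff_exists.mp ho
    obtain ⟨g, hg, hgx, heq⟩ := (meromorphicOrderAt_eq_int_iff h).mp hm.symm
    right
    have hgne : ∀ᶠ w in nhdsWithin x {x}ᶜ, g w ≠ 0 :=
      (hg.continuousAt.eventually_ne hgx).filter_mono nhdsWithin_le_nhds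
    filter_upwards [heq, hgne, self_mem_nhdsWithin] with w hw hgw hwx
    rw [hw]
    simp only [smul_eq_mul]
    exact mul_ne_zero (zpow_ne_zero _ (sub_ne_zero.mpr hwx)) hgw

lemma global_dichotomy {f : ℂ → ℂ} (hf : ∀ z : ℂ, MeromorphicAt f z) :
    (∀ z : ℂ, ∀ᶠ w in nhdsWithin z {z}ᶜ, f w = 0) ∨
    (∀ z : ℂ, ∀ᶠ w in nhdsWithin z {z}ᶜ, f w ≠ 0) := by
  set A : Set ℂ := {z | ∀ᶠ w in nhdsWithin z {z}ᶜ, f w = 0} with hA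
  have hopen : IsOpen A := by
    rw [isOpen_iff_mem_nhds]
    intro z hz
    rw [_root_.mem_nhds_iff]
    have hz' : ∀ᶠ w in nhdsWithin z {z}ᶜ, f w = 0 := hz
    rw [eventually_nhdsWithin_iff] at hz'
    obtain ⟨t, htp, hto, hzt⟩ := _root_.eventually_nhds_iff.mp hz'
    refine ⟨t, ?_, hto, hzt⟩
    intro z' hz't
    show ∀ᶠ w in nhdsWithin z' {z'}ᶜ, f w = 0
    have hmem : t ∩ {z}ᶜ ∈ nhdsWithin z' {z'}ᶜ := by
      rcases eq_or_ne z' z with rfl | hne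
      · exact inter_mem (mem_nhdsWithin_of_mem_nhds (hto.mem_nhds hz't))
          self_mem_nhdsWithin
      · refine mem_nhdsWithin_of_mem_nhds ?_
        exact inter_mem (hto.mem_nhds hz't) (isOpen_compl_singleton.mem_nhds hne)
    filter_upwards [hmem] with w hw
    exact htp w hw.1 hw.2
  have hopenc : IsOpen Aᶜ := by
    rw [isOpen_iff_mem_nhds]
    intro z hz
    rw [_root_.mem_nhds_iff]
    have hz2 : ∀ᶠ w in nhdsWithin z {z}ᶜ, f w ≠ 0 := by
      rcases (hf z).zero_or_ne with h | h
      · exact absurd h hz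
      · exact h
    rw [eventually_nhdsWithin_iff] at hz2
    obtain ⟨t, htp, hto, hzt⟩ := _root_.eventually_nhds_iff.mp hz2
    refine ⟨t, ?_, hto, hzt⟩
    intro z' hz't
    intro hz'A
    rcases eq_or_ne z' z with rfl | hne
    · exact hz hz'A
    · have hmem : t ∩ {z}ᶜ ∈ nhdsWithin z' {z'}ᶜ := by
        refine mem_nhdsWithin_of_mem_nhds ?_
        exact inter_mem (hto.mem_nhds hz't) (isOpen_compl_singleton.mem_nhds hne)
      have h0 : ∀ᶠ w in nhdsWithin z' {z'}ᶜ, f w = 0 := hz'A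
      have hcontra : ∀ᶠ w in nhdsWithin z' {z'}ᶜ, False := by
        filter_upwards [h0, hmem] with w hw0 hwt
        exact htp w hwt.1 hwt.2 hw0
      exact hcontra.exists.elim fun w hw => hw
  rcases isClopen_iff.mp ⟨isOpen_compl_iff.mp hopenc, hopen⟩ with h | h
  · right
    intro z
    rcases (hf z).zero_or_ne with hz | hz
    · exact absurd (show z ∈ A from hz) (by simp [h])
    · exact hz
  · left
    intro z
    exact (h ▸ Set.mem_univ z : z ∈ A)

lemma finite_bad {a b : ℝ} (p : ℝ → Prop)
    (h : ∀ θ₀ ∈ Set.Icc a b, ∀ᶠ θ in nhdsWithin θ₀ {θ₀}ᶜ, p θ) :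
    {θ ∈ Set.Icc a b | ¬ p θ}.Finite := by
  have h' : ∀ θ₀ ∈ Set.Icc a b, {θ | θ ≠ θ₀ → p θ} ∈ nhds θ₀ := by
    intro θ₀ hθ₀
    have := h θ₀ hθ₀
    rw [eventually_nhdsWithin_iff] at this
    exact this.mono fun θ hθ hne => hθ hne
  obtain ⟨t, ht⟩ := isCompact_Icc.elim_nhds_subcover' (fun θ₀ _ => {θ | θ ≠ θ₀ → p θ}) h'
  classical
  have hfin : ((fun x : {x // x ∈ Set.Icc a b} => (x : ℝ)) '' (t : Set {x // x ∈ Set.Icc a b})).Finite :=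
    Set.Finite.image _ t.finite_toSet
  refine Set.Finite.subset hfin ?_
  intro θ hθ
  obtain ⟨hθI, hθp⟩ := hθ
  obtain ⟨x, hx, hθx⟩ := Set.mem_iUnion₂.mp (ht hθI)
  rcases eq_or_ne θ (x : ℝ) with rfl | hne
  · exact Set.mem_image_of_mem _ (Finset.mem_coe.mpr hx)
  · exact absurd (hθx hne) hθp


lemma logPlus_abs (x : ℝ) : logPlus |x| = logPlus x := by
  unfold logPlus; rw [Real.log_abs]

lemma continuous_circleMap' (r : ℝ) :
    Continuous (fun θ : ℝ => (r : ℂ) * Complex.exp (θ * Complex.I)) := by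
  fun_prop

/-- Local bound and continuity near each parameter. -/
lemma local_data (g : ℂ → ℂ) (hg : ∀ z : ℂ, MeromorphicAt g z) (r : ℝ) (hr : 0 < r)
    (θ₀ : ℝ) :
    ∃ (C : ℝ) (k : ℕ) (δ : ℝ), 0 < δ ∧
      (∀ θ ∈ ball θ₀ δ, θ ≠ θ₀ →
        logPlus ‖g ((r : ℂ) * Complex.exp (θ * Complex.I))‖ ≤
          C + k * logPlus ((θ - θ₀)⁻¹)) ∧
      (∀ θ ∈ ball θ₀ δ, θ ≠ θ₀ →
        ContinuousAt (fun θ : ℝ =>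
          logPlus ‖g ((r : ℂ) * Complex.exp (θ * Complex.I))‖) θ) := by
  set γ : ℝ → ℂ := fun θ => (r : ℂ) * Complex.exp (θ * Complex.I) with hγ
  have hγc : Continuous γ := continuous_circleMap' r
  obtain ⟨k, hk⟩ := hg (γ θ₀)
  set h : ℂ → ℂ := fun w => (w - γ θ₀) ^ k • g w with hh
  set C₀ : ℝ := ‖h (γ θ₀)‖ + 1 with hC₀
  have ev1 : ∀ᶠ w in nhds (γ θ₀), ‖h w‖ ≤ C₀ := by
    have : Filter.Tendsto (fun w => ‖h w‖) (nhds (γ θ₀)) (nhds ‖h (γ θ₀)‖) :=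
      (hk.continuousAt.norm).tendsto
    exact (this.eventually_lt_const (by simp [hC₀])).mono fun w hw => hw.le
  have ev2 : ∀ᶠ w in nhds (γ θ₀), w ≠ γ θ₀ → AnalyticAt ℂ g w := by
    have := (hg (γ θ₀)).eventually_analyticAt
    rwa [eventually_nhdsWithin_iff] at this
  have E1 : ∀ᶠ θ in nhds θ₀, ‖h (γ θ)‖ ≤ C₀ := (hγc.continuousAt).eventually ev1
  have E2 : ∀ᶠ θ in nhds θ₀, (γ θ ≠ γ θ₀ → AnalyticAt ℂ g (γ θ)) :=
    (hγc.continuousAt).eventually ev2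
  have E3 : ∀ᶠ θ in nhds θ₀, |θ - θ₀| < Real.pi / 2 :=
    eventually_abs_sub_lt θ₀ (by positivity)
  obtain ⟨δ, hδ, hball⟩ := Metric.mem_nhds_iff.mp ((E1.and (E2.and E3)).mono
    (fun θ hθ => hθ) : {θ | _} ∈ nhds θ₀)
  refine ⟨logPlus C₀ + k * logPlus ((2 / Real.pi * r)⁻¹), k, δ, hδ, ?_, ?_⟩
  · intro θ hθ hne
    obtain ⟨h1, h2, h3⟩ := hball hθ
    have habs : 0 < |θ - θ₀| := abs_pos.mpr (sub_ne_zero.mpr hne)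
    have hcoef : (0:ℝ) < 2 / Real.pi * r := by positivity
    have dpos : 0 < 2 / Real.pi * r * |θ - θ₀| := by positivity
    have hlow := circle_lower r θ θ₀ hr h3.le
    set d : ℝ := ‖γ θ - γ θ₀‖ with hd
    have hdpos : 0 < d := lt_of_lt_of_le dpos hlow
    have hnorm : ‖h (γ θ)‖ = d ^ k * ‖g (γ θ)‖ := by
      rw [hh]
      simp only [smul_eq_mul, norm_mul, norm_pow]
      rfl
    have hgle : ‖g (γ θ)‖ ≤ C₀ * (d⁻¹) ^ k := by
      have hdk : (0:ℝ) < d ^ k := by positivity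
      rw [inv_pow, mul_comm C₀, ← div_eq_inv_mul, le_div_iff₀ hdk]
      calc ‖g (γ θ)‖ * d ^ k = d ^ k * ‖g (γ θ)‖ := by ring
      _ = ‖h (γ θ)‖ := hnorm.symm
      _ ≤ C₀ := h1
    have step1 : logPlus ‖g (γ θ)‖ ≤ logPlus C₀ + k * logPlus d⁻¹ := by
      refine le_trans (logPlus_mono (norm_nonneg _) hgle) ?_
      refine le_trans (logPlus_mul_le (by positivity) (by positivity)) ?_
      rw [logPlus_pow]
    have hdinv : d⁻¹ ≤ (2 / Real.pi * r)⁻¹ * |θ - θ₀|⁻¹ := by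
      rw [← mul_inv]
      exact inv_anti₀ dpos hlow
    have step2 : logPlus d⁻¹ ≤ logPlus ((2 / Real.pi * r)⁻¹) + logPlus ((θ - θ₀)⁻¹) := by
      refine le_trans (logPlus_mono (by positivity) hdinv) ?_
      refine le_trans (logPlus_mul_le (by positivity) (by positivity)) ?_
      rw [← abs_inv, logPlus_abs]
    have hk0 : (0:ℝ) ≤ (k : ℝ) := Nat.cast_nonneg k
    nlinarith [mul_le_mul_of_nonneg_left step2 hk0]
  · intro θ hθ hne
    obtain ⟨h1, h2, h3⟩ := hball hθ
    have habs : 0 < |θ - θ₀| := abs_pos.mpr (sub_ne_zero.mpr hne)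
    have dpos : 0 < 2 / Real.pi * r * |θ - θ₀| := by positivity
    have hlow := circle_lower r θ θ₀ hr h3.le
    have hγne : γ θ ≠ γ θ₀ := by
      intro hEq
      have h0 : ‖γ θ - γ θ₀‖ = 0 := by rw [hEq, sub_self, norm_zero]
      have hlt : 0 < ‖γ θ - γ θ₀‖ := lt_of_lt_of_le dpos hlow
      rw [h0] at hlt
      exact lt_irrefl 0 hlt
    have hcg : ContinuousAt g (γ θ) := (h2 hγne).continuousAt
    exact continuous_logPlus.continuousAt.comp ((hcg.comp hγc.continuousAt).norm)

lemma integrable_logPlus_circle (g : ℂ → ℂ) (hg : ∀ z : ℂ, MeromorphicAt g z)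
    (r : ℝ) (hr : 0 < r) :
    IntervalIntegrable (fun θ : ℝ => logPlus ‖g ((r : ℂ) * Complex.exp (θ * Complex.I))‖)
      volume 0 (2 * Real.pi) := by
  set F : ℝ → ℝ := fun θ => logPlus ‖g ((r : ℂ) * Complex.exp (θ * Complex.I))‖ with hF
  set K : Set ℝ := Set.Icc 0 (2 * Real.pi) with hK
  choose C k δ hδ hbound hcont using fun θ₀ : ℝ => local_data g hg r hr θ₀
  -- the set of discontinuities in K is finite
  have hScont : ∀ θ₀ ∈ K, ∀ᶠ θ in nhdsWithin θ₀ {θ₀}ᶜ, ContinuousAt F θ := by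
    intro θ₀ _
    rw [eventually_nhdsWithin_iff]
    filter_upwards [ball_mem_nhds θ₀ (hδ θ₀)] with θ hθ hne
    exact hcont θ₀ θ hθ (by simpa using hne)
  have hSfin : {θ ∈ K | ¬ ContinuousAt F θ}.Finite := finite_bad _ hScont
  set S := {θ ∈ K | ¬ ContinuousAt F θ} with hS
  have hS0 : volume S = 0 := hSfin.measure_zero _
  have hsm : ∀ A : Set ℝ, MeasurableSet A → A ⊆ K →
      AEStronglyMeasurable F (volume.restrict A) := by
    intro A hAm hAK
    have hcontOn : ContinuousOn F (K \ S) := by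
      intro θ hθ
      refine ContinuousAt.continuousWithinAt ?_
      by_contra hcc
      exact hθ.2 ⟨hθ.1, hcc⟩
    have base : AEStronglyMeasurable F (volume.restrict (K \ S)) :=
      hcontOn.aestronglyMeasurable (measurableSet_Icc.diff hSfin.measurableSet)
    have hre : volume.restrict (A \ S) = volume.restrict A :=
      Measure.restrict_congr_set (diff_null_ae_eq_self hS0)
    rw [← hre]
    exact base.mono_measure (Measure.restrict_mono (Set.diff_subset_diff_left hAK) le_rfl)
  -- local integrability
  have hpiece : ∀ θ₀ : ℝ, IntegrableOn F (ball θ₀ (δ θ₀) ∩ K) volume := by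
    intro θ₀
    set A := ball θ₀ (δ θ₀) ∩ K with hA
    have hAm : MeasurableSet A := measurableSet_ball.inter measurableSet_Icc
    have hAfin : volume A < ⊤ :=
      lt_of_le_of_lt (measure_mono Set.inter_subset_left) measure_ball_lt_top
    have hdom : IntegrableOn
        (fun θ => C θ₀ + (k θ₀ : ℝ) * logPlus ((θ - θ₀)⁻¹)) A volume := by
      refine Integrable.add ?_ ?_
      · exact (integrableOn_const_iff (C := C θ₀)).mpr (Or.inr hAfin)
      · exact ((integrable_logPlus_inv_shift θ₀).const_mul _).integrableOn
    have hne_ae : ∀ᵐ θ ∂(volume.restrict A), θ ≠ θ₀ := by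
      refine ae_restrict_of_ae ?_
      have h1 : volume ({θ₀} : Set ℝ) = 0 := measure_singleton θ₀
      filter_upwards [measure_eq_zero_iff_ae_notMem.mp h1] with θ hθ
      simpa using hθ
    refine Integrable.mono' hdom (hsm A hAm Set.inter_subset_right) ?_
    filter_upwards [ae_restrict_mem hAm, hne_ae] with θ hθA hθne
    rw [Real.norm_eq_abs, abs_of_nonneg (logPlus_nonneg _)]
    exact hbound θ₀ θ hθA.1 hθne
  -- cover K
  obtain ⟨t, _, hcover⟩ := isCompact_Icc.elim_nhds_subcover
    (fun θ₀ => ball θ₀ (δ θ₀)) (fun θ₀ _ => ball_mem_nhds θ₀ (hδ θ₀))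
  have hunion : IntegrableOn F (⋃ θ₀ ∈ t, (ball θ₀ (δ θ₀) ∩ K)) volume :=
    integrableOn_finset_iUnion.mpr fun θ₀ _ => hpiece θ₀
  have hKint : IntegrableOn F K volume := by
    refine hunion.mono_set ?_
    intro θ hθ
    obtain ⟨θ₀, hθ₀t, hθball⟩ := Set.mem_iUnion₂.mp (hcover hθ)
    exact Set.mem_iUnion₂.mpr ⟨θ₀, hθ₀t, hθball, hθ⟩
  rw [intervalIntegrable_iff_integrableOn_Ioc_of_le (by positivity)]
  exact hKint.mono_set Set.Ioc_subset_Icc_self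


lemma pullback_punctured (r : ℝ) (hr : 0 < r) (θ₀ : ℝ) (w₀ : ℂ) (p : ℂ → Prop)
    (z₀ : ℂ) (hz₀ : z₀ = (r : ℂ) * Complex.exp (θ₀ * Complex.I) + w₀)
    (h : ∀ᶠ w in nhdsWithin z₀ {z₀}ᶜ, p w) :
    ∀ᶠ θ : ℝ in nhdsWithin θ₀ {θ₀}ᶜ, p ((r : ℂ) * Complex.exp ((θ : ℂ) * Complex.I) + w₀) := by
  set γ : ℝ → ℂ := fun θ => (r : ℂ) * Complex.exp (θ * Complex.I) + w₀ with hγ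
  have hγc : Continuous γ := by fun_prop
  subst hz₀
  rw [eventually_nhdsWithin_iff] at h ⊢
  have h1 : ∀ᶠ θ in nhds θ₀, (γ θ ∈ {γ θ₀}ᶜ → p (γ θ)) := (hγc.continuousAt).eventually h
  have h2 : ∀ᶠ θ in nhds θ₀, |θ - θ₀| < Real.pi / 2 :=
    eventually_abs_sub_lt θ₀ (by positivity)
  filter_upwards [h1, h2] with θ hθ hθ2 hne
  refine hθ ?_
  simp only [Set.mem_compl_iff, Set.mem_singleton_iff] at hne ⊢
  intro hEq
  have hγeq : γ θ - γ θ₀ = 0 := by rw [hEq, sub_self]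
  have habs : 0 < |θ - θ₀| := abs_pos.mpr (sub_ne_zero.mpr hne)
  have hlow := circle_lower r θ θ₀ hr hθ2.le
  have : γ θ - γ θ₀ = (r : ℂ) * Complex.exp (θ * Complex.I) -
      (r : ℂ) * Complex.exp (θ₀ * Complex.I) := by rw [hγ]; ring
  rw [this] at hγeq
  rw [hγeq] at hlow
  simp only [norm_zero] at hlow
  have hpos : 0 < 2 / Real.pi * r * |θ - θ₀| := by positivity
  linarith


lemma pointwise_bound (f : ℂ → ℂ) (n : ℕ) (c : Fin n → ℂ)
    (I : Finset (Fin (n + 1) → ℕ)) (hI : I.Nonempty)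
    (a : (Fin (n + 1) → ℕ) → ℂ → ℂ) (z : ℂ)
    (hz : f z ≠ 0 ∨ ∀ j : Fin n, f (z + c j) = 0) :
    logPlus ‖∑ lam ∈ I, a lam z * f z ^ lam 0 * ∏ j : Fin n, f (z + c j) ^ lam j.succ‖ ≤
      ((I.sup fun lam => ∑ j : Fin (n + 1), lam j : ℕ) : ℝ) * logPlus ‖f z‖
        + ((∑ lam ∈ I, ∑ j : Fin (n + 1), lam j : ℕ) : ℝ) *
            (∑ j : Fin n, logPlus ‖f (z + c j) / f z‖)
        + (∑ lam ∈ I, logPlus ‖a lam z‖)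
        + Real.log I.card := by
  classical
  set D : ℕ := I.sup fun lam => ∑ j : Fin (n + 1), lam j with hD
  set T : (Fin (n + 1) → ℕ) → ℂ := fun lam =>
    a lam z * f z ^ lam 0 * ∏ j : Fin n, f (z + c j) ^ lam j.succ with hT
  set q : Fin n → ℝ := fun j => logPlus ‖f (z + c j) / f z‖ with hq
  -- per-term bound
  have key : ∀ lam ∈ I, logPlus ‖T lam‖ ≤
      (D : ℝ) * logPlus ‖f z‖ +
        (logPlus ‖a lam z‖ + ∑ j : Fin n, (lam j.succ : ℝ) * q j) := by
    intro lam hlam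
    have hDl : ((∑ j : Fin (n + 1), lam j : ℕ) : ℝ) ≤ (D : ℝ) := by
      exact_mod_cast Finset.le_sup hlam
    by_cases hfz : f z = 0
    · -- degenerate case: all factors are 0 or 1
      have hjz : ∀ j : Fin n, f (z + c j) = 0 := hz.resolve_left (by simp [hfz])
      have hTle : ‖T lam‖ ≤ ‖a lam z‖ := by
        rw [hT]
        simp only [norm_mul, norm_prod, norm_pow, hfz, hjz, norm_zero]
        have h1 : ∀ k : ℕ, (0:ℝ) ^ k ≤ 1 := by
          intro k; rcases Nat.eq_zero_or_pos k with rfl | hk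
          · simp
          · rw [zero_pow hk.ne']; norm_num
        calc ‖a lam z‖ * 0 ^ lam 0 * ∏ j : Fin n, (0:ℝ) ^ lam j.succ
            ≤ ‖a lam z‖ * 1 * 1 := by
              refine mul_le_mul (mul_le_mul le_rfl (h1 _) (by positivity) (norm_nonneg _))
                (Finset.prod_le_one (fun j _ => by positivity) (fun j _ => h1 _))
                (by positivity) (by positivity)
        _ = ‖a lam z‖ := by ring
      refine le_trans (logPlus_mono (norm_nonneg _) hTle) ?_
      have h2 : (0:ℝ) ≤ (D : ℝ) * logPlus ‖f z‖ := by
        exact mul_nonneg (Nat.cast_nonneg _) (logPlus_nonneg _)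
      have h3 : (0:ℝ) ≤ ∑ j : Fin n, (lam j.succ : ℝ) * q j :=
        Finset.sum_nonneg fun j _ => mul_nonneg (Nat.cast_nonneg _) (logPlus_nonneg _)
      linarith
    · -- main case
      have hfzn : ‖f z‖ ≠ 0 := norm_ne_zero_iff.mpr hfz
      have hnorm : ‖T lam‖ = ‖a lam z‖ *
          ((∏ j : Fin n, ‖f (z + c j) / f z‖ ^ lam j.succ) *
            ‖f z‖ ^ (∑ j : Fin (n + 1), lam j)) := by
        rw [hT]
        simp only [norm_mul, norm_prod, norm_pow]
        have hfc : ∀ j : Fin n, ‖f (z + c j)‖ = ‖f (z + c j) / f z‖ * ‖f z‖ := by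
          intro j; rw [norm_div, div_mul_cancel₀ _ hfzn]
        rw [Fin.sum_univ_succ, pow_add]
        have : ∏ j : Fin n, ‖f (z + c j)‖ ^ lam j.succ =
            (∏ j : Fin n, ‖f (z + c j) / f z‖ ^ lam j.succ) *
              ‖f z‖ ^ (∑ j : Fin n, lam j.succ) := by
          rw [← Finset.prod_pow_eq_pow_sum, ← Finset.prod_mul_distrib]
          exact Finset.prod_congr rfl fun j _ => by rw [hfc j, mul_pow]
        rw [this]
        ring
      have hnn1 : (0:ℝ) ≤ ∏ j : Fin n, ‖f (z + c j) / f z‖ ^ lam j.succ :=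
        Finset.prod_nonneg fun j _ => pow_nonneg (norm_nonneg _) _
      have hnn2 : (0:ℝ) ≤ ‖f z‖ ^ (∑ j : Fin (n + 1), lam j) :=
        pow_nonneg (norm_nonneg _) _
      have step1 : logPlus ‖T lam‖ ≤ logPlus ‖a lam z‖ +
          (logPlus (∏ j : Fin n, ‖f (z + c j) / f z‖ ^ lam j.succ) +
            logPlus (‖f z‖ ^ (∑ j : Fin (n + 1), lam j))) := by
        rw [hnorm]
        refine le_trans (logPlus_mul_le (norm_nonneg _) (mul_nonneg hnn1 hnn2)) ?_
        exact add_le_add le_rfl (logPlus_mul_le hnn1 hnn2)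
      refine le_trans step1 ?_
      have step2 : logPlus (∏ j : Fin n, ‖f (z + c j) / f z‖ ^ lam j.succ) ≤
          ∑ j : Fin n, (lam j.succ : ℝ) * q j := by
        refine le_trans (logPlus_prod_le _ _ fun j _ => pow_nonneg (norm_nonneg _) _) ?_
        refine le_of_eq (Finset.sum_congr rfl fun j _ => ?_)
        rw [logPlus_pow]
      have step3 : logPlus (‖f z‖ ^ (∑ j : Fin (n + 1), lam j)) ≤ (D:ℝ) * logPlus ‖f z‖ := by
        rw [logPlus_pow]
        exact mul_le_mul_of_nonneg_right hDl (logPlus_nonneg _)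
      linarith
  -- sum over I
  have hnormsum : ‖∑ lam ∈ I, T lam‖ ≤ ∑ lam ∈ I, ‖T lam‖ := norm_sum_le _ _
  obtain ⟨i₀, hi₀, hmax⟩ := logPlus_sum_le I (fun lam => ‖T lam‖) hI fun lam _ => norm_nonneg _
  have main : logPlus ‖∑ lam ∈ I, T lam‖ ≤ Real.log I.card + logPlus ‖T i₀‖ :=
    le_trans (logPlus_mono (norm_nonneg _) hnormsum) hmax
  have hsingle : logPlus ‖T i₀‖ ≤ (D : ℝ) * logPlus ‖f z‖ +
      ∑ lam ∈ I, (logPlus ‖a lam z‖ + ∑ j : Fin n, (lam j.succ : ℝ) * q j) := by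
    refine le_trans (key i₀ hi₀) ?_
    refine add_le_add le_rfl ?_
    refine Finset.single_le_sum
      (f := fun lam => logPlus ‖a lam z‖ + ∑ j : Fin n, (lam j.succ : ℝ) * q j)
      (fun lam _ => ?_) hi₀
    exact add_nonneg (logPlus_nonneg _)
      (Finset.sum_nonneg fun j _ => mul_nonneg (Nat.cast_nonneg _) (logPlus_nonneg _))
  have hswap : ∑ lam ∈ I, ∑ j : Fin n, (lam j.succ : ℝ) * q j ≤
      ((∑ lam ∈ I, ∑ j : Fin (n + 1), lam j : ℕ) : ℝ) * ∑ j : Fin n, q j := by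
    rw [Finset.sum_comm, Finset.mul_sum]
    refine Finset.sum_le_sum fun j _ => ?_
    rw [← Finset.sum_mul]
    refine mul_le_mul_of_nonneg_right ?_ (logPlus_nonneg _)
    push_cast
    refine Finset.sum_le_sum fun lam hlam => ?_
    exact_mod_cast Finset.single_le_sum (f := fun jj : Fin (n+1) => (lam jj : ℝ))
      (fun jj _ => Nat.cast_nonneg _) (Finset.mem_univ j.succ)
  rw [Finset.sum_add_distrib] at hsingle
  have : ∑ j : Fin n, q j = ∑ j : Fin n, logPlus ‖f (z + c j) / f z‖ := rfl
  linarith [main, hsingle, hswap]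


theorem proximity_of_difference_polynomial
    (f : ℂ → ℂ) (hf : MeromorphicOn f Set.univ)
    (n : ℕ) (c : Fin n → ℂ) (hc : ∀ j : Fin n, c j ≠ 0)
    (I : Finset (Fin (n + 1) → ℕ)) (hI : I.Nonempty)
    (a : (Fin (n + 1) → ℕ) → ℂ → ℂ)
    (ha : ∀ lam ∈ I, MeromorphicOn (a lam) Set.univ)
    (r : ℝ) (hr : 0 < r) :
    nevProx (fun z => ∑ lam ∈ I,
        a lam z * f z ^ lam 0 * ∏ j : Fin n, f (z + c j) ^ lam j.succ) r ≤
      ((I.sup fun lam => ∑ j : Fin (n + 1), lam j : ℕ) : ℝ) * nevProx f r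
        + ((∑ lam ∈ I, ∑ j : Fin (n + 1), lam j : ℕ) : ℝ) *
            (∑ j : Fin n, nevProx (fun z => f (z + c j) / f z) r)
        + (∑ lam ∈ I, nevProx (a lam) r)
        + ((I.sup fun lam => ∑ j : Fin (n + 1), lam j : ℕ) : ℝ) *
            Real.log (2 * (I.card : ℝ)) := by
  classical
  have hfm : ∀ z : ℂ, MeromorphicAt f z := fun z => hf z (Set.mem_univ z)
  have h2π : (0:ℝ) < 2 * Real.pi := by positivity
  set P : ℂ → ℂ := fun z => ∑ lam ∈ I,
      a lam z * f z ^ lam 0 * ∏ j : Fin n, f (z + c j) ^ lam j.succ with hP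
  have hPm : ∀ z : ℂ, MeromorphicAt P z := by
    intro x
    refine meromorphicAt_sum I _ x fun lam hlam => ?_
    have h1 : MeromorphicAt (fun z => a lam z * f z ^ lam 0) x :=
      (ha lam hlam x (Set.mem_univ x)).mul ((hfm x).pow _)
    have h2 : MeromorphicAt (fun z => ∏ j : Fin n, f (z + c j) ^ lam j.succ) x :=
      meromorphicAt_prod Finset.univ _ x fun j _ => ((hfm (x + c j)).translate).pow _
    exact h1.mul h2
  have hqm : ∀ j : Fin n, ∀ z : ℂ, MeromorphicAt (fun w => f (w + c j) / f w) z :=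
    fun j z => ((hfm (z + c j)).translate).div (hfm z)
  -- interval integrability of all integrands
  have hFP := integrable_logPlus_circle P hPm r hr
  have hFf := integrable_logPlus_circle f hfm r hr
  have hFq : ∀ j : Fin n, IntervalIntegrable (fun θ : ℝ =>
      logPlus ‖f ((r:ℂ) * Complex.exp (θ * Complex.I) + c j) /
        f ((r:ℂ) * Complex.exp (θ * Complex.I))‖) volume 0 (2 * Real.pi) :=
    fun j => integrable_logPlus_circle _ (hqm j) r hr
  have hFa : ∀ lam ∈ I, IntervalIntegrable (fun θ : ℝ =>
      logPlus ‖a lam ((r:ℂ) * Complex.exp (θ * Complex.I))‖) volume 0 (2 * Real.pi) :=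
    fun lam hlam => integrable_logPlus_circle _ (fun z => ha lam hlam z (Set.mem_univ z)) r hr
  -- the exceptional set where the pointwise estimate may fail is finite
  have hgood : ∀ θ₀ ∈ Set.Icc (0:ℝ) (2 * Real.pi), ∀ᶠ θ : ℝ in nhdsWithin θ₀ {θ₀}ᶜ,
      (f ((r:ℂ) * Complex.exp (θ * Complex.I)) ≠ 0 ∨
        ∀ j : Fin n, f ((r:ℂ) * Complex.exp (θ * Complex.I) + c j) = 0) := by
    rcases global_dichotomy hfm with h0 | hne
    · intro θ₀ _
      have hj : ∀ j : Fin n, ∀ᶠ θ : ℝ in nhdsWithin θ₀ {θ₀}ᶜ,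
          f ((r:ℂ) * Complex.exp (θ * Complex.I) + c j) = 0 := fun j =>
        pullback_punctured r hr θ₀ (c j) (fun w => f w = 0) _ rfl (h0 _)
      exact (eventually_all.mpr hj).mono fun θ hθ => Or.inr hθ
    · intro θ₀ _
      have h1 := pullback_punctured r hr θ₀ 0 (fun w => f w ≠ 0) _ rfl (hne _)
      exact h1.mono fun θ hθ => Or.inl (by simpa using hθ)
  have hbadfin : {θ ∈ Set.Icc (0:ℝ) (2 * Real.pi) |
      ¬ (f ((r:ℂ) * Complex.exp (θ * Complex.I)) ≠ 0 ∨
        ∀ j : Fin n, f ((r:ℂ) * Complex.exp (θ * Complex.I) + c j) = 0)}.Finite :=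
    finite_bad _ hgood
  have hbad0 := hbadfin.measure_zero volume
  -- pointwise comparison, a.e. on [0, 2π]
  have h_ae : ∀ᵐ (θ : ℝ) ∂(volume.restrict (Set.Icc (0:ℝ) (2 * Real.pi))),
      logPlus ‖P ((r:ℂ) * Complex.exp (θ * Complex.I))‖ ≤
        ((I.sup fun lam => ∑ j : Fin (n + 1), lam j : ℕ) : ℝ) *
            logPlus ‖f ((r:ℂ) * Complex.exp (θ * Complex.I))‖
          + ((∑ lam ∈ I, ∑ j : Fin (n + 1), lam j : ℕ) : ℝ) *
              (∑ j : Fin n, logPlus ‖f ((r:ℂ) * Complex.exp (θ * Complex.I) + c j) /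
                f ((r:ℂ) * Complex.exp (θ * Complex.I))‖)
          + (∑ lam ∈ I, logPlus ‖a lam ((r:ℂ) * Complex.exp (θ * Complex.I))‖)
          + Real.log I.card := by
    filter_upwards [ae_restrict_mem measurableSet_Icc,
      ae_restrict_of_ae (measure_eq_zero_iff_ae_notMem.mp hbad0)] with θ hIcc hnbad
    have hgoodθ : f ((r:ℂ) * Complex.exp (θ * Complex.I)) ≠ 0 ∨
        ∀ j : Fin n, f ((r:ℂ) * Complex.exp (θ * Complex.I) + c j) = 0 := by
      by_contra hcon
      exact hnbad ⟨hIcc, hcon⟩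
    exact pointwise_bound f n c I hI a _ hgoodθ
  -- integrate
  have hGsum1 : IntervalIntegrable (fun θ : ℝ => ∑ j : Fin n,
      logPlus ‖f ((r:ℂ) * Complex.exp (θ * Complex.I) + c j) /
        f ((r:ℂ) * Complex.exp (θ * Complex.I))‖) volume 0 (2 * Real.pi) := by
    have h1 := IntervalIntegrable.sum Finset.univ (fun j _ => hFq j)
    have h2 : (∑ j ∈ Finset.univ, fun θ : ℝ =>
        logPlus ‖f ((r:ℂ) * Complex.exp (θ * Complex.I) + c j) /
          f ((r:ℂ) * Complex.exp (θ * Complex.I))‖) = fun θ : ℝ => ∑ j : Fin n,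
        logPlus ‖f ((r:ℂ) * Complex.exp (θ * Complex.I) + c j) /
          f ((r:ℂ) * Complex.exp (θ * Complex.I))‖ := by
      funext θ
      simp [Finset.sum_apply]
    rwa [h2] at h1
  have hGsum2 : IntervalIntegrable (fun θ : ℝ => ∑ lam ∈ I,
      logPlus ‖a lam ((r:ℂ) * Complex.exp (θ * Complex.I))‖) volume 0 (2 * Real.pi) := by
    have h1 := IntervalIntegrable.sum I (fun lam hlam => hFa lam hlam)
    have h2 : (∑ lam ∈ I, fun θ : ℝ =>
        logPlus ‖a lam ((r:ℂ) * Complex.exp (θ * Complex.I))‖) = fun θ : ℝ => ∑ lam ∈ I,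
        logPlus ‖a lam ((r:ℂ) * Complex.exp (θ * Complex.I))‖ := by
      funext θ
      simp [Finset.sum_apply]
    rwa [h2] at h1
  set D : ℝ := ((I.sup fun lam => ∑ j : Fin (n + 1), lam j : ℕ) : ℝ) with hD
  set S : ℝ := ((∑ lam ∈ I, ∑ j : Fin (n + 1), lam j : ℕ) : ℝ) with hS
  have hG : IntervalIntegrable (fun θ : ℝ =>
      D * logPlus ‖f ((r:ℂ) * Complex.exp (θ * Complex.I))‖
        + S * (∑ j : Fin n, logPlus ‖f ((r:ℂ) * Complex.exp (θ * Complex.I) + c j) /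
            f ((r:ℂ) * Complex.exp (θ * Complex.I))‖)
        + (∑ lam ∈ I, logPlus ‖a lam ((r:ℂ) * Complex.exp (θ * Complex.I))‖)
        + Real.log I.card) volume 0 (2 * Real.pi) :=
    (((hFf.const_mul D).add (hGsum1.const_mul S)).add hGsum2).add intervalIntegrable_const
  have hint : (∫ θ in (0:ℝ)..(2 * Real.pi), logPlus ‖P ((r:ℂ) * Complex.exp (θ * Complex.I))‖)
      ≤ ∫ θ in (0:ℝ)..(2 * Real.pi),
        (D * logPlus ‖f ((r:ℂ) * Complex.exp (θ * Complex.I))‖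
          + S * (∑ j : Fin n, logPlus ‖f ((r:ℂ) * Complex.exp (θ * Complex.I) + c j) /
              f ((r:ℂ) * Complex.exp (θ * Complex.I))‖)
          + (∑ lam ∈ I, logPlus ‖a lam ((r:ℂ) * Complex.exp (θ * Complex.I))‖)
          + Real.log I.card) :=
    intervalIntegral.integral_mono_ae_restrict h2π.le hFP hG h_ae
  have hsplit : (∫ θ in (0:ℝ)..(2 * Real.pi),
        (D * logPlus ‖f ((r:ℂ) * Complex.exp (θ * Complex.I))‖
          + S * (∑ j : Fin n, logPlus ‖f ((r:ℂ) * Complex.exp (θ * Complex.I) + c j) /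
              f ((r:ℂ) * Complex.exp (θ * Complex.I))‖)
          + (∑ lam ∈ I, logPlus ‖a lam ((r:ℂ) * Complex.exp (θ * Complex.I))‖)
          + Real.log I.card))
      = D * (∫ θ in (0:ℝ)..(2 * Real.pi), logPlus ‖f ((r:ℂ) * Complex.exp (θ * Complex.I))‖)
        + S * (∑ j : Fin n, ∫ θ in (0:ℝ)..(2 * Real.pi),
            logPlus ‖f ((r:ℂ) * Complex.exp (θ * Complex.I) + c j) /
              f ((r:ℂ) * Complex.exp (θ * Complex.I))‖)
        + (∑ lam ∈ I, ∫ θ in (0:ℝ)..(2 * Real.pi),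
            logPlus ‖a lam ((r:ℂ) * Complex.exp (θ * Complex.I))‖)
        + (2 * Real.pi) * Real.log I.card := by
    rw [intervalIntegral.integral_add (((hFf.const_mul D).add (hGsum1.const_mul S)).add hGsum2)
        intervalIntegrable_const,
      intervalIntegral.integral_add ((hFf.const_mul D).add (hGsum1.const_mul S)) hGsum2,
      intervalIntegral.integral_add (hFf.const_mul D) (hGsum1.const_mul S),
      intervalIntegral.integral_const_mul, intervalIntegral.integral_const_mul,
      intervalIntegral.integral_const,
      intervalIntegral.integral_finset_sum (fun lam hlam => hFa lam hlam),
      intervalIntegral.integral_finset_sum (fun (j : Fin n) _ => hFq j)]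
    rw [sub_zero, smul_eq_mul]
  -- the coefficient of the logarithmic error term
  have hcard1 : (1:ℝ) ≤ (I.card : ℝ) := by exact_mod_cast hI.card_pos
  have hlogle : Real.log I.card ≤ D * Real.log (2 * (I.card : ℝ)) := by
    rcases Nat.eq_zero_or_pos (I.sup fun lam => ∑ j : Fin (n + 1), lam j) with hD0 | hD1
    · have hall : ∀ lam ∈ I, lam = fun _ => 0 := by
        intro lam hlam
        have hle : (∑ j : Fin (n + 1), lam j) ≤ 0 := hD0 ▸ Finset.le_sup hlam
        have hz : ∀ j : Fin (n + 1), lam j = 0 := by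
          intro j
          have := Finset.sum_eq_zero_iff.mp (Nat.le_zero.mp hle)
          exact this j (Finset.mem_univ j)
        funext j
        exact hz j
      obtain ⟨lam₀, hlam₀⟩ := hI
      have hcard : I.card = 1 := by
        refine Finset.card_eq_one.mpr ⟨fun _ => 0, ?_⟩
        ext lam
        simp only [Finset.mem_singleton]
        constructor
        · intro h; exact hall lam h
        · intro h; rw [h, ← hall lam₀ hlam₀]; exact hlam₀
      rw [hcard, hD, hD0]
      simp
    · have hD1' : (1:ℝ) ≤ D := by
        rw [hD]; exact_mod_cast hD1
      have h2c : (1:ℝ) ≤ 2 * (I.card : ℝ) := by linarith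
      calc Real.log I.card ≤ Real.log (2 * (I.card : ℝ)) :=
            Real.log_le_log (by linarith) (by linarith)
      _ ≤ D * Real.log (2 * (I.card : ℝ)) :=
            le_mul_of_one_le_left (Real.log_nonneg h2c) hD1'
  -- put everything together
  simp only [nevProx]
  rw [← Finset.mul_sum, ← Finset.mul_sum]
  have hfac : (2 * Real.pi)⁻¹ *
      (D * (∫ θ in (0:ℝ)..(2 * Real.pi), logPlus ‖f ((r:ℂ) * Complex.exp (θ * Complex.I))‖)
        + S * (∑ j : Fin n, ∫ θ in (0:ℝ)..(2 * Real.pi),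
            logPlus ‖f ((r:ℂ) * Complex.exp (θ * Complex.I) + c j) /
              f ((r:ℂ) * Complex.exp (θ * Complex.I))‖)
        + (∑ lam ∈ I, ∫ θ in (0:ℝ)..(2 * Real.pi),
            logPlus ‖a lam ((r:ℂ) * Complex.exp (θ * Complex.I))‖)
        + (2 * Real.pi) * Real.log I.card)
      = D * ((2 * Real.pi)⁻¹ *
          (∫ θ in (0:ℝ)..(2 * Real.pi), logPlus ‖f ((r:ℂ) * Complex.exp (θ * Complex.I))‖))
        + S * ((2 * Real.pi)⁻¹ * (∑ j : Fin n, ∫ θ in (0:ℝ)..(2 * Real.pi),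
            logPlus ‖f ((r:ℂ) * Complex.exp (θ * Complex.I) + c j) /
              f ((r:ℂ) * Complex.exp (θ * Complex.I))‖))
        + ((2 * Real.pi)⁻¹ * (∑ lam ∈ I, ∫ θ in (0:ℝ)..(2 * Real.pi),
            logPlus ‖a lam ((r:ℂ) * Complex.exp (θ * Complex.I))‖))
        + Real.log I.card := by
    rw [mul_add, mul_add, mul_add, ← mul_assoc (2 * Real.pi)⁻¹ (2 * Real.pi), inv_mul_cancel₀ h2π.ne', one_mul]
    ring
  have hmul := mul_le_mul_of_nonneg_left (hint.trans_eq hsplit) (inv_nonneg.mpr h2π.le)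
  rw [hfac] at hmul
  refine le_trans hmul ?_
  linarith [hlogle]
end
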